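/- arXiv:2305.07885 — 3 statements merged into one kernel-verified Lean document; each statement's English description precedes it below -/
import Mathlib

section
/- Suppose the symmetric 3-tensor T satisfies condition (Γ). Then for every u ∈ ℝ^p it holds ‖T[u]‖_Fr² ≤ τ² ‖Γu‖² tr(Γ⁴), where T[u] = ∑_{i=1}^p u_i T_i. -/
set_option maxHeartbeats 1000000

open Matrix Finset

/-- Euclidean norm on `ℝ^p`. -/
noncomputable def euclNorm {p : ℕ} (v : Fin p → ℝ) : ℝ := Real.sqrt (∑ i, v i ^ 2)


def S3 {p : ℕ} (T : Fin p → Fin p → Fin p → ℝ) (u v w : Fin p → ℝ) : ℝ :=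
  ∑ i, ∑ j, ∑ k, T i j k * u i * v j * w k

def bil2 {p : ℕ} (P : Fin p → Fin p → ℝ) (u v : Fin p → ℝ) : ℝ :=
  ∑ i, ∑ j, P i j * u i * v j

/-- Quadratic form of a Gram-plus-diagonal matrix. -/
lemma bil2_gram {p : ℕ} (Γ : Matrix (Fin p) (Fin p) ℝ) (ε : ℝ) (w : Fin p → ℝ) :
    bil2 (fun j k => (∑ i, Γ i j * Γ i k) + ε * (if j = k then 1 else 0)) w w
      = (∑ i, (∑ j, Γ i j * w j) ^ 2) + ε * ∑ i, w i ^ 2 := by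
  unfold bil2
  have per : ∀ j k : Fin p,
      ((∑ i, Γ i j * Γ i k) + ε * (if j = k then 1 else 0)) * w j * w k
        = (∑ i, (Γ i j * w j) * (Γ i k * w k)) + (if j = k then ε * w j * w k else 0) := by
    intro j k
    have hs : (∑ i, Γ i j * Γ i k) * w j * w k = ∑ i, (Γ i j * w j) * (Γ i k * w k) := by
      rw [Finset.sum_mul, Finset.sum_mul]
      exact Finset.sum_congr rfl fun i _ => by ring
    by_cases h : j = k
    · subst h
      simp only [if_true]
      rw [add_mul, add_mul, hs]
      ring
    · simp only [h, if_false]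
      rw [add_mul, add_mul, hs]
      ring
  calc ∑ j, ∑ k, ((∑ i, Γ i j * Γ i k) + ε * (if j = k then 1 else 0)) * w j * w k
      = ∑ j, ∑ k, ((∑ i, (Γ i j * w j) * (Γ i k * w k))
          + (if j = k then ε * w j * w k else 0)) := by
        exact Finset.sum_congr rfl fun j _ => Finset.sum_congr rfl fun k _ => per j k
    _ = (∑ j, ∑ k, ∑ i, (Γ i j * w j) * (Γ i k * w k))
          + ∑ j, ∑ k, (if j = k then ε * w j * w k else 0) := by
        rw [← Finset.sum_add_distrib]
        exact Finset.sum_congr rfl fun j _ => by rw [← Finset.sum_add_distrib]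
    _ = (∑ i, (∑ j, Γ i j * w j) ^ 2) + ε * ∑ i, w i ^ 2 := by
        congr 1
        · calc ∑ j, ∑ k, ∑ i, (Γ i j * w j) * (Γ i k * w k)
              = ∑ j, ∑ i, ∑ k, (Γ i j * w j) * (Γ i k * w k) := by
                exact Finset.sum_congr rfl fun j _ => Finset.sum_comm
            _ = ∑ i, ∑ j, ∑ k, (Γ i j * w j) * (Γ i k * w k) := Finset.sum_comm
            _ = ∑ i, (∑ j, Γ i j * w j) ^ 2 := by
                refine Finset.sum_congr rfl fun i _ => ?_
                rw [← Finset.sum_mul_sum]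
                ring
        · calc ∑ j, ∑ k, (if j = k then ε * w j * w k else 0)
              = ∑ j, ε * w j ^ 2 := by
                refine Finset.sum_congr rfl fun j _ => ?_
                rw [Finset.sum_ite_eq]
                simp [sq, mul_assoc]
            _ = ε * ∑ i, w i ^ 2 := by rw [Finset.mul_sum]
  
/-- Diagonal entries of a conjugated matrix are values of the bilinear form at
the columns. -/
lemma conj_entry {p : ℕ} (R U : Matrix (Fin p) (Fin p) ℝ) (m : Fin p) :
    (Uᵀ * R * U) m m = bil2 (fun j k => R j k) (fun j => U j m) (fun j => U j m) := by
  unfold bil2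
  simp only [Matrix.mul_apply, Matrix.transpose_apply, Finset.sum_mul]
  rw [Finset.sum_comm]
  exact Finset.sum_congr rfl fun j _ => Finset.sum_congr rfl fun k _ => by ring

/-- The bilinear form of the tensor slice equals the trilinear form. -/
lemma bil2_slice {p : ℕ} (T : Fin p → Fin p → Fin p → ℝ) (u v w : Fin p → ℝ) :
    bil2 (fun j k => ∑ i, u i * T i j k) v w = S3 T u v w := by
  unfold bil2 S3
  calc ∑ j, ∑ k, (∑ i, u i * T i j k) * v j * w k
      = ∑ j, ∑ k, ∑ i, T i j k * u i * v j * w k := by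
        refine Finset.sum_congr rfl fun j _ => Finset.sum_congr rfl fun k _ => ?_
        rw [Finset.sum_mul, Finset.sum_mul]
        exact Finset.sum_congr rfl fun i _ => by ring
    _ = ∑ j, ∑ i, ∑ k, T i j k * u i * v j * w k := by
        exact Finset.sum_congr rfl fun j _ => Finset.sum_comm
    _ = ∑ i, ∑ j, ∑ k, T i j k * u i * v j * w k := Finset.sum_comm

open Finset

/-- The sharp 2D Banach-type bound for cubic forms, via an explicit
three-point quadrature at trisected angles. -/
lemma key2d (A B C D τ : ℝ) (hτ : 0 ≤ τ)
    (h : ∀ x y : ℝ, x ^ 2 + y ^ 2 = 1 →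
      (A * x ^ 3 + 3 * B * x ^ 2 * y + 3 * C * x * y ^ 2 + D * y ^ 3) ^ 2 ≤ τ ^ 2) :
    A ^ 2 + B ^ 2 ≤ τ ^ 2 := by
  by_cases hAB : A ^ 2 + B ^ 2 = 0
  · rw [hAB]; positivity
  set R : ℝ := Real.sqrt (A ^ 2 + B ^ 2) with hRdef
  have hABnn : (0:ℝ) ≤ A ^ 2 + B ^ 2 := by positivity
  have hR2 : R ^ 2 = A ^ 2 + B ^ 2 := Real.sq_sqrt hABnn
  have hRpos : 0 < R := Real.sqrt_pos.mpr (lt_of_le_of_ne hABnn (Ne.symm hAB))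
  set z : ℂ := ⟨A, B⟩ with hz
  have hzabs : ‖z‖ = R := by
    rw [Complex.norm_def, Complex.normSq_mk]; rw [hRdef]; ring_nf
  have hzne : z ≠ 0 := by
    intro h0
    rw [h0] at hzabs; simp at hzabs; exact (ne_of_gt hRpos) hzabs.symm
  set β : ℝ := z.arg / 3 with hβ
  set c : ℝ := Real.cos β with hc
  set s : ℝ := Real.sin β with hs
  have h1 : c ^ 2 + s ^ 2 = 1 := by rw [hc, hs]; rw [add_comm]; exact Real.sin_sq_add_cos_sq β
  have hcos : 4 * c ^ 3 - 3 * c = A / R := by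
    have h3 : 3 * β = z.arg := by rw [hβ]; ring
    have := Real.cos_three_mul β
    rw [h3] at this
    rw [← this, Complex.cos_arg hzne, hzabs]
  have hsin : 3 * s - 4 * s ^ 3 = B / R := by
    have h3 : 3 * β = z.arg := by rw [hβ]; ring
    have := Real.sin_three_mul β
    rw [h3] at this
    rw [← this, Complex.sin_arg, hzabs]
  set r : ℝ := Real.sqrt 3 with hrdef
  have hr : r ^ 2 = 3 := Real.sq_sqrt (by norm_num)
  -- quadrature nodes
  set x₀ : ℝ := c with hx0
  set y₀ : ℝ := s with hy0
  set x₁ : ℝ := (c - r * s) / 2 with hx1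
  set y₁ : ℝ := (s + r * c) / 2 with hy1
  set x₂ : ℝ := (-c - r * s) / 2 with hx2
  set y₂ : ℝ := (-s + r * c) / 2 with hy2
  -- weights
  set W₀ : ℝ := (1 + 2 * (c ^ 2 - s ^ 2)) ^ 2 / 9 with hW0
  set W₁ : ℝ := (1 - (c ^ 2 - s ^ 2) - 2 * r * c * s) ^ 2 / 9 with hW1
  set W₂ : ℝ := (1 - (c ^ 2 - s ^ 2) + 2 * r * c * s) ^ 2 / 9 with hW2
  have hW0n : 0 ≤ W₀ := by positivity
  have hW1n : 0 ≤ W₁ := by positivity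
  have hW2n : 0 ≤ W₂ := by positivity
  set q₀ : ℝ := A * x₀ ^ 3 + 3 * B * x₀ ^ 2 * y₀ + 3 * C * x₀ * y₀ ^ 2 + D * y₀ ^ 3 with hq0def
  set q₁ : ℝ := A * x₁ ^ 3 + 3 * B * x₁ ^ 2 * y₁ + 3 * C * x₁ * y₁ ^ 2 + D * y₁ ^ 3 with hq1def
  set q₂ : ℝ := A * x₂ ^ 3 + 3 * B * x₂ ^ 2 * y₂ + 3 * C * x₂ * y₂ ^ 2 + D * y₂ ^ 3 with hq2def
  have hu0 : x₀ ^ 2 + y₀ ^ 2 = 1 := h1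
  have hu1 : x₁ ^ 2 + y₁ ^ 2 = 1 := by
    rw [hx1, hy1]; linear_combination ((c ^ 2 + s ^ 2) / 4) * hr + h1
  have hu2 : x₂ ^ 2 + y₂ ^ 2 = 1 := by
    rw [hx2, hy2]; linear_combination ((c ^ 2 + s ^ 2) / 4) * hr + h1
  have hb0 : q₀ ^ 2 ≤ τ ^ 2 := h _ _ hu0
  have hb1 : q₁ ^ 2 ≤ τ ^ 2 := h _ _ hu1
  have hb2 : q₂ ^ 2 ≤ τ ^ 2 := h _ _ hu2
  have ha0 : q₀ ≤ τ := (abs_le_of_sq_le_sq' hb0 hτ).2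
  have ha1 : -τ ≤ q₁ := (abs_le_of_sq_le_sq' hb1 hτ).1
  have ha2 : q₂ ≤ τ := (abs_le_of_sq_le_sq' hb2 hτ).2
  -- mass identity
  have hmass : W₀ + W₁ + W₂ = 1 := by
    rw [hW0, hW1, hW2]
    linear_combination ((8/9)*c^2*s^2) * hr + ((2/3) + (2/3)*s^2 + (2/3)*c^2) * h1
  -- main quadrature identity
  have hmain : W₀ * q₀ - W₁ * q₁ + W₂ * q₂
      = A * (4 * c ^ 3 - 3 * c) + B * (3 * s - 4 * s ^ 3) := by
    rw [hq0def, hq1def, hq2def, hW0, hW1, hW2, hx0, hy0, hx1, hy1, hx2, hy2]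
    linear_combination
      ((-1/12)*s^3*B + (-1/6)*s^5*B + (-1/12)*s^7*B + (1/6)*c*s^2*C + (-1/12)*c*s^2*A + (-1/2)*c*s^4*A + (-1/9)*c*s^4*r^2*A + (-1/6)*c*s^6*C + (-5/12)*c*s^6*A + (-1/9)*c*s^6*r^2*A + (-1/12)*c^2*s*D + (1/6)*c^2*s*B + (1/6)*c^2*s^3*D + (5/6)*c^2*s^3*B + (1/3)*c^2*s^3*r^2*B + (5/36)*c^2*s^5*D + (-1/3)*c^2*s^5*B + (-1/12)*c^3*C + (-5/6)*c^3*s^2*C + (-1/6)*c^3*s^2*A + (-1/3)*c^3*s^2*r^2*C + (5/4)*c^3*s^4*C + (-5/6)*c^3*s^4*A + (1/3)*c^3*s^4*r^2*C + (-2/9)*c^3*s^4*r^2*A + (1/2)*c^4*s*D + (1/9)*c^4*s*r^2*D + (-5/6)*c^4*s^3*D + (5/4)*c^4*s^3*B + (-2/9)*c^4*s^3*r^2*D + (1/3)*c^4*s^3*r^2*B + (1/6)*c^5*C + (-1/3)*c^5*s^2*C + (5/36)*c^5*s^2*A + (-5/12)*c^6*s*D + (-1/6)*c^6*s*B + (-1/9)*c^6*s*r^2*D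 + (-1/12)*c^7*C) * hr
      + ((3)*s*B + (-1/12)*s^3*D + (-3/4)*s^3*B + (5/12)*s^5*D + (-1/4)*s^5*B + (-3)*c*A + (-3/4)*c*s^2*C + (-11/4)*c*s^2*A + (3/4)*c*s^4*C + (-5/4)*c*s^4*A + (1/4)*c^2*s*D + (9/4)*c^2*s*B + (-5/6)*c^2*s^3*D + (1/2)*c^2*s^3*B + (1/4)*c^3*C + (11/12)*c^3*A + (1/2)*c^3*s^2*C + (-5/6)*c^3*s^2*A + (-5/4)*c^4*s*D + (3/4)*c^4*s*B + (-1/4)*c^5*C + (5/12)*c^5*A) * h1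
  have hRval : A * (4 * c ^ 3 - 3 * c) + B * (3 * s - 4 * s ^ 3) = R := by
    rw [hcos, hsin]
    field_simp
    linear_combination (-1) * hR2
  have hRle : R ≤ τ := by
    have e0 : W₀ * q₀ ≤ W₀ * τ := mul_le_mul_of_nonneg_left ha0 hW0n
    have e1 : -(W₁ * τ) ≤ W₁ * q₁ := by
      have := mul_le_mul_of_nonneg_left ha1 hW1n
      rw [mul_neg] at this; exact this
    have e2 : W₂ * q₂ ≤ W₂ * τ := mul_le_mul_of_nonneg_left ha2 hW2n
    have hsum : W₀ * τ + W₁ * τ + W₂ * τ = τ := by linear_combination τ * hmass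
    have key : W₀ * q₀ - W₁ * q₁ + W₂ * q₂ ≤ τ := by linarith [e0, e1, e2]
    rw [hmain, hRval] at key
    exact key
  calc A ^ 2 + B ^ 2 = R ^ 2 := hR2.symm
    _ ≤ τ ^ 2 := pow_le_pow_left₀ (le_of_lt hRpos) hRle 2

open Finset

lemma S3_swap12 {p : ℕ} {T : Fin p → Fin p → Fin p → ℝ}
    (hsym : ∀ i j k, T i j k = T j i k ∧ T i j k = T i k j)
    (u v w : Fin p → ℝ) : S3 T u v w = S3 T v u w := by
  unfold S3
  rw [Finset.sum_comm]
  refine Finset.sum_congr rfl fun i _ => Finset.sum_congr rfl fun j _ =>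
    Finset.sum_congr rfl fun k _ => ?_
  rw [(hsym j i k).1]; ring

lemma S3_swap23 {p : ℕ} {T : Fin p → Fin p → Fin p → ℝ}
    (hsym : ∀ i j k, T i j k = T j i k ∧ T i j k = T i k j)
    (u v w : Fin p → ℝ) : S3 T u v w = S3 T u w v := by
  unfold S3
  refine Finset.sum_congr rfl fun i _ => ?_
  rw [Finset.sum_comm]
  refine Finset.sum_congr rfl fun j _ => Finset.sum_congr rfl fun k _ => ?_
  rw [(hsym i k j).2]; ring

lemma S3_left {p : ℕ} (T : Fin p → Fin p → Fin p → ℝ) (x y : ℝ) (u v w z : Fin p → ℝ) :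
    S3 T (fun i => x * u i + y * v i) w z = x * S3 T u w z + y * S3 T v w z := by
  unfold S3
  rw [Finset.mul_sum, Finset.mul_sum, ← Finset.sum_add_distrib]
  refine Finset.sum_congr rfl fun i _ => ?_
  rw [Finset.mul_sum, Finset.mul_sum, ← Finset.sum_add_distrib]
  refine Finset.sum_congr rfl fun j _ => ?_
  rw [Finset.mul_sum, Finset.mul_sum, ← Finset.sum_add_distrib]
  refine Finset.sum_congr rfl fun k _ => ?_
  ring

lemma S3_mid {p : ℕ} {T : Fin p → Fin p → Fin p → ℝ}
    (hsym : ∀ i j k, T i j k = T j i k ∧ T i j k = T i k j)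
    (x y : ℝ) (u v w z : Fin p → ℝ) :
    S3 T w (fun i => x * u i + y * v i) z = x * S3 T w u z + y * S3 T w v z := by
  rw [S3_swap12 hsym, S3_left, S3_swap12 hsym u w z, S3_swap12 hsym v w z]

lemma S3_right {p : ℕ} {T : Fin p → Fin p → Fin p → ℝ}
    (hsym : ∀ i j k, T i j k = T j i k ∧ T i j k = T i k j)
    (x y : ℝ) (u v w z : Fin p → ℝ) :
    S3 T w z (fun i => x * u i + y * v i) = x * S3 T w z u + y * S3 T w z v := by
  rw [S3_swap23 hsym, S3_mid hsym, S3_swap23 hsym w u z, S3_swap23 hsym w v z]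

lemma S3_expand {p : ℕ} {T : Fin p → Fin p → Fin p → ℝ}
    (hsym : ∀ i j k, T i j k = T j i k ∧ T i j k = T i k j)
    (x y : ℝ) (u v : Fin p → ℝ) :
    S3 T (fun i => x * u i + y * v i) (fun i => x * u i + y * v i)
        (fun i => x * u i + y * v i)
      = x ^ 3 * S3 T u u u + 3 * x ^ 2 * y * S3 T u u v
        + 3 * x * y ^ 2 * S3 T u v v + y ^ 3 * S3 T v v v := by
  set m : Fin p → ℝ := fun i => x * u i + y * v i with hm
  rw [S3_left]
  rw [S3_mid hsym x y u v u m, S3_mid hsym x y u v v m]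
  rw [S3_right hsym x y u v u u, S3_right hsym x y u v u v,
    S3_right hsym x y u v v u, S3_right hsym x y u v v v]
  have e1 : S3 T u v u = S3 T u u v := by
    rw [S3_swap23 hsym u v u]
  have e2 : S3 T v u u = S3 T u u v := by
    rw [S3_swap12 hsym v u u, S3_swap23 hsym u v u]
  have e3 : S3 T v u v = S3 T u v v := by
    rw [S3_swap12 hsym v u v]
  have e4 : S3 T v v u = S3 T u v v := by
    rw [S3_swap23 hsym v v u, S3_swap12 hsym v u v]
  rw [e1, e2, e3, e4]
  ring

lemma S3_zero_left {p : ℕ} (T : Fin p → Fin p → Fin p → ℝ) (v w : Fin p → ℝ) :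
    S3 T (fun _ => (0:ℝ)) v w = 0 := by
  unfold S3
  refine Finset.sum_eq_zero fun i _ => Finset.sum_eq_zero fun j _ =>
    Finset.sum_eq_zero fun k _ => by ring

lemma bil2_symm {p : ℕ} {P : Fin p → Fin p → ℝ}
    (hPsym : ∀ i j, P i j = P j i) (u v : Fin p → ℝ) :
    bil2 P u v = bil2 P v u := by
  unfold bil2
  rw [Finset.sum_comm]
  refine Finset.sum_congr rfl fun i _ => Finset.sum_congr rfl fun j _ => ?_
  rw [hPsym j i]; ring

lemma bil2_left {p : ℕ} (P : Fin p → Fin p → ℝ) (x y : ℝ) (u v w : Fin p → ℝ) :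
    bil2 P (fun i => x * u i + y * v i) w = x * bil2 P u w + y * bil2 P v w := by
  unfold bil2
  rw [Finset.mul_sum, Finset.mul_sum, ← Finset.sum_add_distrib]
  refine Finset.sum_congr rfl fun i _ => ?_
  rw [Finset.mul_sum, Finset.mul_sum, ← Finset.sum_add_distrib]
  refine Finset.sum_congr rfl fun j _ => ?_
  ring

lemma bil2_right {p : ℕ} {P : Fin p → Fin p → ℝ}
    (hPsym : ∀ i j, P i j = P j i) (x y : ℝ) (u v w : Fin p → ℝ) :
    bil2 P w (fun i => x * u i + y * v i) = x * bil2 P w u + y * bil2 P w v := by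
  rw [bil2_symm hPsym, bil2_left, bil2_symm hPsym u w, bil2_symm hPsym v w]

lemma bil2_expand {p : ℕ} {P : Fin p → Fin p → ℝ}
    (hPsym : ∀ i j, P i j = P j i) (x y : ℝ) (u v : Fin p → ℝ) :
    bil2 P (fun i => x * u i + y * v i) (fun i => x * u i + y * v i)
      = x ^ 2 * bil2 P u u + 2 * x * y * bil2 P u v + y ^ 2 * bil2 P v v := by
  set m : Fin p → ℝ := fun i => x * u i + y * v i with hm
  rw [bil2_left, bil2_right hPsym x y u v u, bil2_right hPsym x y u v v,
    bil2_symm hPsym v u]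
  ring

lemma bil2_zero {p : ℕ} (P : Fin p → Fin p → ℝ) :
    bil2 P (0 : Fin p → ℝ) (0 : Fin p → ℝ) = 0 := by
  unfold bil2; simp

/-- The sharp Banach-type bound: `T(u,v,v)² ≤ τ² ⟨u,Pu⟩ ⟨v,Pv⟩²` for a positive
definite symmetric bilinear form `P` dominating the cubic form `T`. -/
lemma key_banach {p : ℕ} {T : Fin p → Fin p → Fin p → ℝ}
    (hsym : ∀ i j k, T i j k = T j i k ∧ T i j k = T i k j)
    {P : Fin p → Fin p → ℝ} (hPsym : ∀ i j, P i j = P j i)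
    (hPD : ∀ w : Fin p → ℝ, w ≠ 0 → 0 < bil2 P w w)
    {τ : ℝ} (hτ : 0 ≤ τ)
    (hT : ∀ w : Fin p → ℝ, (S3 T w w w) ^ 2 ≤ τ ^ 2 * (bil2 P w w) ^ 3)
    (u v : Fin p → ℝ) :
    (S3 T u v v) ^ 2 ≤ τ ^ 2 * bil2 P u u * (bil2 P v v) ^ 2 := by
  have hPnn : ∀ w : Fin p → ℝ, 0 ≤ bil2 P w w := by
    intro w
    by_cases h0 : w = 0
    · rw [h0, bil2_zero]
    · exact (hPD w h0).le
  by_cases hv0 : v = 0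
  · rw [hv0]
    have h00 : S3 T u (0 : Fin p → ℝ) (0 : Fin p → ℝ) = 0 := by unfold S3; simp
    rw [h00]
    have := hPnn u
    nlinarith [sq_nonneg (bil2 P (0:Fin p → ℝ) 0), sq_nonneg τ, mul_nonneg (mul_nonneg (sq_nonneg τ) this) (sq_nonneg (bil2 P (0:Fin p → ℝ) 0))]
  set a2 : ℝ := bil2 P v v with ha2def
  have ha2 : 0 < a2 := hPD v hv0
  set b2 : ℝ := bil2 P u u with hb2def
  have hb2 : 0 ≤ b2 := hPnn u
  set c : ℝ := bil2 P u v with hcdef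
  set w : Fin p → ℝ := fun i => a2 * u i + (-c) * v i with hw
  have hcvu : bil2 P v u = c := by rw [hcdef]; exact bil2_symm hPsym v u
  have hwv : bil2 P w v = 0 := by
    rw [hw, bil2_left, ← hcdef, ← ha2def]; ring
  have hvw : bil2 P v w = 0 := by rw [bil2_symm hPsym v w]; exact hwv
  set ρ2 : ℝ := bil2 P w w with hρ2def
  have hρ2 : ρ2 = a2 * (a2 * b2 - c * c) := by
    rw [hρ2def, hw, bil2_left, bil2_right hPsym, bil2_right hPsym, hcvu,
      ← ha2def, ← hb2def, ← hcdef]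
    ring
  have hSwvv : S3 T w v v = a2 * S3 T u v v + (-c) * S3 T v v v := by
    rw [hw, S3_left]
  have hρnn : 0 ≤ ρ2 := hPnn w
  by_cases hρ0 : ρ2 = 0
  · -- degenerate case : w = 0
    have hwz : w = 0 := by
      by_contra hne
      exact (hPD w hne).ne' hρ0
    have hS0 : S3 T w v v = 0 := by
      rw [hwz]; unfold S3; simp
    have hlin : a2 * S3 T u v v = c * S3 T v v v := by
      rw [hS0] at hSwvv; linarith
    have h0 : a2 * (a2 * b2 - c * c) = 0 := by rw [← hρ2]; rw [hρ2def] at hρ0 ⊢; exact hρ0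
    have hcc : c * c = a2 * b2 := by
      rcases mul_eq_zero.mp h0 with h | h
      · exact absurd h ha2.ne'
      · linarith
    have hTv := hT v
    rw [← ha2def] at hTv
    have hccnn : 0 ≤ c * c := mul_self_nonneg c
    have step : (a2 * S3 T u v v) ^ 2 ≤ (a2 * b2) * (τ ^ 2 * a2 ^ 3) := by
      calc (a2 * S3 T u v v) ^ 2 = c * c * (S3 T v v v) ^ 2 := by rw [hlin]; ring
        _ ≤ c * c * (τ ^ 2 * a2 ^ 3) := mul_le_mul_of_nonneg_left hTv hccnn
        _ = (a2 * b2) * (τ ^ 2 * a2 ^ 3) := by rw [hcc]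
    have ha2sq : (0:ℝ) < a2 ^ 2 := by positivity
    have := (mul_le_mul_iff_right₀ ha2sq).mp (by nlinarith [step] : a2 ^ 2 * (S3 T u v v) ^ 2 ≤ a2 ^ 2 * (τ ^ 2 * b2 * a2 ^ 2))
    exact this
  · -- main case
    have hρpos : 0 < ρ2 := lt_of_le_of_ne hρnn (Ne.symm hρ0)
    set a : ℝ := Real.sqrt a2 with hadef
    set ρ : ℝ := Real.sqrt ρ2 with hρdef
    have ha : a ^ 2 = a2 := Real.sq_sqrt ha2.le
    have hρ : ρ ^ 2 = ρ2 := Real.sq_sqrt hρpos.le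
    have hap : 0 < a := Real.sqrt_pos.mpr ha2
    have hρp : 0 < ρ := Real.sqrt_pos.mpr hρpos
    set A : ℝ := S3 T v v v / a ^ 3 with hA
    set B : ℝ := S3 T v v w / (a ^ 2 * ρ) with hB
    set C : ℝ := S3 T v w w / (a * ρ ^ 2) with hC
    set D : ℝ := S3 T w w w / ρ ^ 3 with hD
    have hkey : A ^ 2 + B ^ 2 ≤ τ ^ 2 := by
      apply key2d A B C D τ hτ
      intro x y hxy
      set z : Fin p → ℝ := fun i => (x / a) * v i + (y / ρ) * w i with hz
      have hz2 : bil2 P z z = 1 := by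
        rw [hz, bil2_expand hPsym, hvw, ← ha2def, ← hρ2def, ← ha, ← hρ]
        field_simp
        linear_combination (a * ρ) * hxy
      have hTz := hT z
      rw [hz2] at hTz
      have hSz : S3 T z z z = A * x ^ 3 + 3 * B * x ^ 2 * y + 3 * C * x * y ^ 2 + D * y ^ 3 := by
        rw [hz, S3_expand hsym, hA, hB, hC, hD]
        field_simp
      rw [← hSz]
      simpa using hTz
    -- reconstruct S3 T u v v
    have hSB : S3 T w v v = S3 T v v w := by
      rw [S3_swap12 hsym w v v, S3_swap23 hsym v w v]
    have hSAval : S3 T v v v = A * a ^ 3 := by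
      rw [hA]; field_simp
    have hSBval : S3 T v v w = B * (a ^ 2 * ρ) := by
      rw [hB]; field_simp
    have f1 : a2 * S3 T u v v = B * (a ^ 2 * ρ) + c * (A * a ^ 3) := by
      rw [← hSBval, ← hSAval, ← hSB]
      rw [hSwvv]; ring
    have hCS : (B * ρ + c * a * A) ^ 2 ≤ (ρ ^ 2 + c ^ 2 * a ^ 2) * (A ^ 2 + B ^ 2) := by
      nlinarith [sq_nonneg (A * ρ - c * a * B)]
    have hfac : ρ ^ 2 + c ^ 2 * a ^ 2 = a2 * (a2 * b2) := by
      rw [ha, hρ, hρ2]; ring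
    have hfacnn : 0 ≤ ρ ^ 2 + c ^ 2 * a ^ 2 := by positivity
    have step : (a2 * S3 T u v v) ^ 2 ≤ a2 ^ 2 * (τ ^ 2 * b2 * a2 ^ 2) := by
      have e1 : (a2 * S3 T u v v) ^ 2 = a ^ 4 * (B * ρ + c * a * A) ^ 2 := by
        rw [f1]; ring
      have e2 : a ^ 4 * (B * ρ + c * a * A) ^ 2
          ≤ a ^ 4 * ((ρ ^ 2 + c ^ 2 * a ^ 2) * (A ^ 2 + B ^ 2)) := by
        apply mul_le_mul_of_nonneg_left hCS (by positivity)
      have e3 : (ρ ^ 2 + c ^ 2 * a ^ 2) * (A ^ 2 + B ^ 2)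
          ≤ (ρ ^ 2 + c ^ 2 * a ^ 2) * τ ^ 2 :=
        mul_le_mul_of_nonneg_left hkey hfacnn
      have e4 : a ^ 4 * ((ρ ^ 2 + c ^ 2 * a ^ 2) * (A ^ 2 + B ^ 2))
          ≤ a ^ 4 * ((ρ ^ 2 + c ^ 2 * a ^ 2) * τ ^ 2) :=
        mul_le_mul_of_nonneg_left e3 (by positivity)
      have e5 : a ^ 4 * ((ρ ^ 2 + c ^ 2 * a ^ 2) * τ ^ 2) = a2 ^ 2 * (τ ^ 2 * b2 * a2 ^ 2) := by
        rw [hfac]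
        have : a ^ 4 = a2 ^ 2 := by rw [← ha]; ring
        rw [this]; ring
      calc (a2 * S3 T u v v) ^ 2 = a ^ 4 * (B * ρ + c * a * A) ^ 2 := e1
        _ ≤ a ^ 4 * ((ρ ^ 2 + c ^ 2 * a ^ 2) * (A ^ 2 + B ^ 2)) := e2
        _ ≤ a ^ 4 * ((ρ ^ 2 + c ^ 2 * a ^ 2) * τ ^ 2) := e4
        _ = a2 ^ 2 * (τ ^ 2 * b2 * a2 ^ 2) := e5
    have ha2sq : (0:ℝ) < a2 ^ 2 := by positivity
    exact (mul_le_mul_iff_right₀ ha2sq).mp (by nlinarith [step])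

/-- The bound for a fixed regularization `ε > 0`. -/
lemma main_eps
    (p : ℕ) (T : Fin p → Fin p → Fin p → ℝ)
    (hsym : ∀ i j k, T i j k = T j i k ∧ T i j k = T i k j)
    (Γ : Matrix (Fin p) (Fin p) ℝ) (hΓ : Γ.IsSymm) (τ : ℝ) (hτ : 0 < τ)
    (hT : ∀ u : Fin p → ℝ,
      |∑ i, ∑ j, ∑ k, T i j k * u i * u j * u k| ≤ τ * euclNorm (Γ.mulVec u) ^ 3)
    (u : Fin p → ℝ) (ε : ℝ) (hε : 0 < ε) :
    ((∑ i, u i • Matrix.of fun j k : Fin p => T i j k)ᵀ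
          * ∑ i, u i • Matrix.of fun j k : Fin p => T i j k).trace
        ≤ τ ^ 2 * (euclNorm (Γ.mulVec u) ^ 2 + ε * ∑ i, u i ^ 2)
          * ((Γ ^ 4).trace + ε * (2 * (Γ ^ 2).trace) + ε ^ 2 * (p : ℝ)) := by
  classical
  set M : Matrix (Fin p) (Fin p) ℝ := ∑ i, u i • Matrix.of fun j k : Fin p => T i j k
    with hM
  have hMentry : ∀ j k, M j k = ∑ i, u i * T i j k := by
    intro j k
    rw [hM]
    simp [Matrix.sum_apply]
  have hMsymT : Mᵀ = M := by
    ext j k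
    rw [Matrix.transpose_apply, hMentry, hMentry]
    refine Finset.sum_congr rfl fun i _ => ?_
    rw [(hsym i k j).2, (hsym i j k).2]
  have hherm : M.IsHermitian := by
    rw [Matrix.IsHermitian, Matrix.conjTranspose_eq_transpose_of_trivial]
    exact hMsymT
  set ev : Fin p → ℝ := hherm.eigenvalues with hev
  set U : Matrix (Fin p) (Fin p) ℝ := (hherm.eigenvectorUnitary : Matrix (Fin p) (Fin p) ℝ)
    with hU
  have hU1 : Uᵀ * U = 1 := by
    have h := Matrix.mem_unitaryGroup_iff'.mp hherm.eigenvectorUnitary.2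
    rwa [Matrix.star_eq_conjTranspose, Matrix.conjTranspose_eq_transpose_of_trivial] at h
  have hU2 : U * Uᵀ = 1 := by
    have h := Matrix.mem_unitaryGroup_iff.mp hherm.eigenvectorUnitary.2
    rwa [Matrix.star_eq_conjTranspose, Matrix.conjTranspose_eq_transpose_of_trivial] at h
  have hspec : M = U * Matrix.diagonal ev * Uᵀ := by
    have h := hherm.spectral_theorem
    rw [Unitary.conjStarAlgAut_apply, Matrix.star_eq_conjTranspose, Matrix.conjTranspose_eq_transpose_of_trivial] at h
    simpa [RCLike.ofReal_real_eq_id] using h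
  have hdiagM : Uᵀ * M * U = Matrix.diagonal ev := by
    rw [hspec]
    calc Uᵀ * (U * Matrix.diagonal ev * Uᵀ) * U
        = (Uᵀ * U) * Matrix.diagonal ev * (Uᵀ * U) := by noncomm_ring
      _ = Matrix.diagonal ev := by rw [hU1, one_mul, mul_one]
  have hlam : ∀ m, S3 T u (fun j => U j m) (fun j => U j m) = ev m := by
    intro m
    have h1 := conj_entry M U m
    rw [hdiagM, Matrix.diagonal_apply_eq] at h1
    have h2 : (fun j k => M j k) = fun j k => ∑ i, u i * T i j k :=
      funext fun j => funext fun k => hMentry j k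
    rw [h2, bil2_slice] at h1
    exact h1.symm
  have htr : (Mᵀ * M).trace = ∑ m, (ev m) ^ 2 := by
    rw [hMsymT]
    have hMM : M * M = U * (Matrix.diagonal ev * Matrix.diagonal ev) * Uᵀ := by
      rw [hspec]
      calc (U * Matrix.diagonal ev * Uᵀ) * (U * Matrix.diagonal ev * Uᵀ)
          = U * Matrix.diagonal ev * (Uᵀ * U) * Matrix.diagonal ev * Uᵀ := by noncomm_ring
        _ = U * (Matrix.diagonal ev * Matrix.diagonal ev) * Uᵀ := by rw [hU1]; noncomm_ring
    rw [hMM, Matrix.diagonal_mul_diagonal, Matrix.trace_mul_cycle, hU1, one_mul,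
      Matrix.trace_diagonal]
    exact Finset.sum_congr rfl fun m _ => by simp [Pi.mul_apply, sq]
  -- the regularized Gram bilinear form
  set Pf : Fin p → Fin p → ℝ :=
    fun j k => (∑ i, Γ i j * Γ i k) + ε * (if j = k then 1 else 0) with hPf
  have hPsym : ∀ j k, Pf j k = Pf k j := by
    intro j k
    simp only [hPf]
    congr 1
    · exact Finset.sum_congr rfl fun i _ => mul_comm _ _
    · by_cases h : j = k
      · subst h; rfl
      · rw [if_neg h, if_neg fun hh => h hh.symm]
  have hPquad : ∀ w, bil2 Pf w w = (∑ i, ((Γ.mulVec w) i) ^ 2) + ε * ∑ i, w i ^ 2 := by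
    intro w
    have h := bil2_gram Γ ε w
    rw [hPf, h]
    simp [Matrix.mulVec, dotProduct]
  have hPD : ∀ w : Fin p → ℝ, w ≠ 0 → 0 < bil2 Pf w w := by
    intro w hw
    rw [hPquad w]
    have h1 : 0 ≤ ∑ i, ((Γ.mulVec w) i) ^ 2 := Finset.sum_nonneg fun i _ => sq_nonneg _
    have h2 : 0 < ∑ i, w i ^ 2 := by
      obtain ⟨i, hi⟩ := Function.ne_iff.mp hw
      refine Finset.sum_pos' (fun j _ => sq_nonneg _) ⟨i, Finset.mem_univ i, ?_⟩
      have : w i ≠ 0 := hi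
      positivity
    nlinarith [mul_pos hε h2]
  have hT' : ∀ w : Fin p → ℝ, (S3 T w w w) ^ 2 ≤ τ ^ 2 * (bil2 Pf w w) ^ 3 := by
    intro w
    have hb := hT w
    have habs := abs_le.mp hb
    have h1 : (S3 T w w w) ^ 2 ≤ (τ * euclNorm (Γ.mulVec w) ^ 3) ^ 2 := by
      have hrfl : S3 T w w w = ∑ i, ∑ j, ∑ k, T i j k * w i * w j * w k := rfl
      rw [hrfl]
      exact sq_le_sq' (by linarith [habs.1]) habs.2
    have h2 : euclNorm (Γ.mulVec w) ^ 2 = ∑ i, ((Γ.mulVec w) i) ^ 2 :=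
      Real.sq_sqrt (Finset.sum_nonneg fun i _ => sq_nonneg _)
    have h3 : euclNorm (Γ.mulVec w) ^ 2 ≤ bil2 Pf w w := by
      rw [hPquad w, h2]
      have hnn : 0 ≤ ε * ∑ i, w i ^ 2 :=
        mul_nonneg hε.le (Finset.sum_nonneg fun i _ => sq_nonneg _)
      linarith
    calc (S3 T w w w) ^ 2 ≤ (τ * euclNorm (Γ.mulVec w) ^ 3) ^ 2 := h1
      _ = τ ^ 2 * (euclNorm (Γ.mulVec w) ^ 2) ^ 3 := by ring
      _ ≤ τ ^ 2 * (bil2 Pf w w) ^ 3 := by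
          refine mul_le_mul_of_nonneg_left ?_ (sq_nonneg τ)
          exact pow_le_pow_left₀ (sq_nonneg _) h3 3
  have hcol : ∀ m, (ev m) ^ 2
      ≤ τ ^ 2 * bil2 Pf u u * (bil2 Pf (fun j => U j m) (fun j => U j m)) ^ 2 := by
    intro m
    rw [← hlam m]
    exact key_banach hsym hPsym hPD hτ.le hT' u (fun j => U j m)
  set Pm : Matrix (Fin p) (Fin p) ℝ := Matrix.of Pf with hPm
  have hPmsym : Pmᵀ = Pm := by
    ext j k
    rw [Matrix.transpose_apply]
    exact hPsym k j
  set Q : Matrix (Fin p) (Fin p) ℝ := Uᵀ * Pm * U with hQ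
  have hQdiag : ∀ m, bil2 Pf (fun j => U j m) (fun j => U j m) = Q m m := by
    intro m
    rw [hQ, conj_entry Pm U m]
    rfl
  have hQfrob : ∑ m, (Q m m) ^ 2 ≤ (Pm * Pm).trace := by
    have step1 : ∀ m, (Q m m) ^ 2 ≤ ∑ j, (Q j m) ^ 2 := fun m =>
      Finset.single_le_sum (f := fun j => (Q j m) ^ 2) (fun j _ => sq_nonneg _)
        (Finset.mem_univ m)
    have step2 : ∑ m, ∑ j, (Q j m) ^ 2 = (Qᵀ * Q).trace := by
      rw [Matrix.trace]
      simp only [Matrix.diag_apply, Matrix.mul_apply, Matrix.transpose_apply]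
      exact Finset.sum_congr rfl fun m _ => Finset.sum_congr rfl fun j _ => (sq (Q j m))
    have step3 : (Qᵀ * Q).trace = (Pm * Pm).trace := by
      have ht : Qᵀ = Uᵀ * Pmᵀ * U := by
        rw [hQ, Matrix.transpose_mul, Matrix.transpose_mul, Matrix.transpose_transpose]
        noncomm_ring
      rw [ht, hPmsym, hQ]
      have hmid : Uᵀ * Pm * U * (Uᵀ * Pm * U) = Uᵀ * (Pm * (U * Uᵀ) * Pm) * U := by
        noncomm_ring
      rw [hmid, hU2, Matrix.mul_one]
      rw [Matrix.trace_mul_cycle, ← Matrix.mul_assoc, hU2, Matrix.one_mul]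
    calc ∑ m, (Q m m) ^ 2 ≤ ∑ m, ∑ j, (Q j m) ^ 2 := Finset.sum_le_sum fun m _ => step1 m
      _ = (Qᵀ * Q).trace := step2
      _ = (Pm * Pm).trace := step3
  have hPtr : (Pm * Pm).trace
      = (Γ ^ 4).trace + ε * (2 * (Γ ^ 2).trace) + ε ^ 2 * (p : ℝ) := by
    have hPmeq : Pm = Γᵀ * Γ + ε • (1 : Matrix (Fin p) (Fin p) ℝ) := by
      ext j k
      simp only [hPm, hPf, Matrix.of_apply, Matrix.add_apply, Matrix.mul_apply,
        Matrix.transpose_apply, Matrix.smul_apply, Matrix.one_apply, smul_eq_mul, mul_ite,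
        mul_one, mul_zero]
    have hΓT : Γᵀ = Γ := hΓ
    rw [hPmeq, hΓT]
    have hexp : (Γ * Γ + ε • 1) * (Γ * Γ + ε • 1)
        = Γ * Γ * (Γ * Γ) + ε • (Γ * Γ) + ε • (Γ * Γ) + (ε * ε) • (1 : Matrix (Fin p) (Fin p) ℝ) := by
      simp only [add_mul, mul_add, Matrix.smul_mul, Matrix.mul_smul, Matrix.one_mul,
        Matrix.mul_one, smul_smul]
      abel
    rw [hexp]
    simp only [Matrix.trace_add, Matrix.trace_smul, Matrix.trace_one, Fintype.card_fin]
    have h4 : Γ * Γ * (Γ * Γ) = Γ ^ 4 := by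
      rw [pow_succ, pow_succ, pow_succ, pow_one]
      noncomm_ring
    have h2' : Γ * Γ = Γ ^ 2 := (pow_two Γ).symm
    rw [h4, h2']
    simp only [smul_eq_mul]
    ring
  have hPuu : 0 ≤ bil2 Pf u u := by
    by_cases h0 : u = 0
    · rw [hPquad u, h0]
      simp
    · exact (hPD u h0).le
  have hbu : bil2 Pf u u = euclNorm (Γ.mulVec u) ^ 2 + ε * ∑ i, u i ^ 2 := by
    rw [hPquad u]
    have h2 : euclNorm (Γ.mulVec u) ^ 2 = ∑ i, ((Γ.mulVec u) i) ^ 2 :=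
      Real.sq_sqrt (Finset.sum_nonneg fun i _ => sq_nonneg _)
    rw [h2]
  have hgoal : (Mᵀ * M).trace
      ≤ τ ^ 2 * (euclNorm (Γ.mulVec u) ^ 2 + ε * ∑ i, u i ^ 2)
        * ((Γ ^ 4).trace + ε * (2 * (Γ ^ 2).trace) + ε ^ 2 * (p : ℝ)) := by
    calc (Mᵀ * M).trace = ∑ m, (ev m) ^ 2 := htr
      _ ≤ ∑ m, τ ^ 2 * bil2 Pf u u * (bil2 Pf (fun j => U j m) (fun j => U j m)) ^ 2 :=
          Finset.sum_le_sum fun m _ => hcol m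
      _ = τ ^ 2 * bil2 Pf u u * ∑ m, (Q m m) ^ 2 := by
          rw [Finset.mul_sum]
          exact Finset.sum_congr rfl fun m _ => by rw [hQdiag m]
      _ ≤ τ ^ 2 * bil2 Pf u u * (Pm * Pm).trace := by
          refine mul_le_mul_of_nonneg_left hQfrob ?_
          exact mul_nonneg (sq_nonneg τ) hPuu
      _ = τ ^ 2 * (euclNorm (Γ.mulVec u) ^ 2 + ε * ∑ i, u i ^ 2)
          * ((Γ ^ 4).trace + ε * (2 * (Γ ^ 2).trace) + ε ^ 2 * (p : ℝ)) := by
          rw [hbu, hPtr]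
  exact hgoal



/-- If the symmetric 3-tensor `T` satisfies condition (Γ), then for every
`u ∈ ℝ^p` it holds `‖T[u]‖_Fr² ≤ τ² ‖Γu‖² tr(Γ⁴)`, where `T[u] = ∑ i, u i • T_i` and
`‖A‖_Fr² = tr(AᵀA)`. -/
theorem tensor_slice_frobenius_bound
    (p : ℕ) (T : Fin p → Fin p → Fin p → ℝ)
    (hsym : ∀ i j k, T i j k = T j i k ∧ T i j k = T i k j)
    (Γ : Matrix (Fin p) (Fin p) ℝ) (hΓ : Γ.IsSymm) (τ : ℝ) (hτ : 0 < τ)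
    (hT : ∀ u : Fin p → ℝ,
      |∑ i, ∑ j, ∑ k, T i j k * u i * u j * u k| ≤ τ * euclNorm (Γ.mulVec u) ^ 3) :
    ∀ u : Fin p → ℝ,
      ((∑ i, u i • Matrix.of fun j k : Fin p => T i j k)ᵀ
          * ∑ i, u i • Matrix.of fun j k : Fin p => T i j k).trace
        ≤ τ ^ 2 * euclNorm (Γ.mulVec u) ^ 2 * (Γ ^ 4).trace := by
  intro u
  set L : ℝ := ((∑ i, u i • Matrix.of fun j k : Fin p => T i j k)ᵀ
          * ∑ i, u i • Matrix.of fun j k : Fin p => T i j k).trace with hL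
  set N : ℝ := euclNorm (Γ.mulVec u) ^ 2 with hN
  set Su : ℝ := ∑ i, u i ^ 2 with hSu
  set T4 : ℝ := (Γ ^ 4).trace with hT4
  set T2 : ℝ := (Γ ^ 2).trace with hT2
  set F : ℝ → ℝ := fun ε => τ ^ 2 * (N + ε * Su) * (T4 + ε * (2 * T2) + ε ^ 2 * (p : ℝ))
    with hF
  have hmain : ∀ ε ∈ Set.Ioi (0:ℝ), L ≤ F ε := fun ε hε =>
    main_eps p T hsym Γ hΓ τ hτ hT u ε (Set.mem_Ioi.mp hε)
  have hcont : Filter.Tendsto F (nhdsWithin 0 (Set.Ioi 0)) (nhds (F 0)) := by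
    apply Filter.Tendsto.mono_left _ nhdsWithin_le_nhds
    apply Continuous.tendsto
    rw [hF]
    continuity
  have hF0 : F 0 = τ ^ 2 * N * T4 := by rw [hF]; ring_nf
  rw [hF0] at hcont
  exact ge_of_tendsto hcont (Filter.eventually_iff_exists_mem.mpr
    ⟨Set.Ioi 0, self_mem_nhdsWithin, hmain⟩)
end

section
/- Suppose the symmetric 3-tensor T satisfies condition (Γ). Then ‖T‖_Fr² ≤ τ² tr(Γ²) tr(Γ⁴), where ‖T‖_Fr² = ∑_{i,j,k=1}^p T_{i,j,k}². -/
open Matrix Finset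

lemma core_identity (c s t A B C D : ℝ) (hcs : c^2 + s^2 = 1) (ht : t^2 = 3) :
    ((4*c^2-1)^2/9) * (A*c^3 + 3*B*c^2*s + 3*C*c*s^2 + D*s^3) +
      ((4*(-c/2 - t*s/2)^2-1)^2/9) * (A*(-c/2 - t*s/2)^3 + 3*B*(-c/2 - t*s/2)^2*(-s/2 + t*c/2) + 3*C*(-c/2 - t*s/2)*(-s/2 + t*c/2)^2 + D*(-s/2 + t*c/2)^3) +
      ((4*(-c/2 + t*s/2)^2-1)^2/9) * (A*(-c/2 + t*s/2)^3 + 3*B*(-c/2 + t*s/2)^2*(-s/2 - t*c/2) + 3*C*(-c/2 + t*s/2)*(-s/2 - t*c/2)^2 + D*(-s/2 - t*c/2)^3) =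
      (4*c^3 - 3*c)*A + (3*s - 4*s^3)*B := by
  linear_combination ((3 : ℝ)*s*B + (-1/12 : ℝ)*s^3*D + (-3/4 : ℝ)*s^3*B + (-1/4 : ℝ)*s^5*D + (-9/4 : ℝ)*s^5*B + (-3 : ℝ)*c*A + (-3/4 : ℝ)*c*s^2*C + (-11/4 : ℝ)*c*s^2*A + (3/4 : ℝ)*c*s^4*C + (-21/4 : ℝ)*c*s^4*A + (1/4 : ℝ)*c^2*s*D + (9/4 : ℝ)*c^2*s*B + (1/2 : ℝ)*c^2*s^3*D + (9/2 : ℝ)*c^2*s^3*B + (1/4 : ℝ)*c^3*C + (11/12 : ℝ)*c^3*A + (1/2 : ℝ)*c^3*s^2*C + (-7/2 : ℝ)*c^3*s^2*A + (3/4 : ℝ)*c^4*s*D + (27/4 : ℝ)*c^4*s*B + (-1/4 : ℝ)*c^5*C + (7/4 : ℝ)*c^5*A) * hcs + ((-1/12 : ℝ)*s^3*B + (1/18 : ℝ)*s^5*D + (1/2 : ℝ)*s^5*B + (1/6 : ℝ)*s^5*t^2*B + (-1/12 : ℝ)*s^7*D + (-3/4 : ℝ)*s^7*B + (-1/36 :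 ℝ)*s^7*t^2*D + (-1/4 : ℝ)*s^7*t^2*B + (-1/12 : ℝ)*s^7*t^4*B + (1/6 : ℝ)*c*s^2*C + (-1/12 : ℝ)*c*s^2*A + (-1/2 : ℝ)*c*s^4*C + (5/6 : ℝ)*c*s^4*A + (-1/3 : ℝ)*c*s^4*t^2*C + (5/18 : ℝ)*c*s^4*t^2*A + (1/4 : ℝ)*c*s^6*C + (-7/4 : ℝ)*c*s^6*A + (1/12 : ℝ)*c*s^6*t^2*C + (-7/12 : ℝ)*c*s^6*t^2*A + (1/6 : ℝ)*c*s^6*t^4*C + (-7/36 : ℝ)*c*s^6*t^4*A + (-1/12 : ℝ)*c^2*s*D + (1/6 : ℝ)*c^2*s*B + (1/6 : ℝ)*c^2*s^3*D + (-1 : ℝ)*c^2*s^3*B + (1/6 : ℝ)*c^2*s^3*t^2*D + (-2/3 : ℝ)*c^2*s^3*t^2*B + (1/12 : ℝ)*c^2*s^5*D + (3/4 : ℝ)*c^2*s^5*B + (1/12 : ℝ)*c^2*s^5*t^2*D + (1/4 : ℝ)*c^2*s^5*t^2*B + (-1/12 : ℝ)*c^2*s^5*t^4*D + (1/2 : ℝ)*c^2*s^5*t^4*B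 + (-1/12 : ℝ)*c^3*C + (1/2 : ℝ)*c^3*s^2*C + (5/9 : ℝ)*c^3*s^2*A + (1/2 : ℝ)*c^3*s^2*t^2*C + (5/12 : ℝ)*c^3*s^4*C + (-35/12 : ℝ)*c^3*s^4*A + (5/12 : ℝ)*c^3*s^4*t^2*C + (-35/36 : ℝ)*c^3*s^4*t^2*A + (-5/12 : ℝ)*c^3*s^4*t^4*C + (-1/6 : ℝ)*c^4*s*D + (-2/3 : ℝ)*c^4*s*B + (-1/9 : ℝ)*c^4*s*t^2*D + (-1/6 : ℝ)*c^4*s^3*D + (15/4 : ℝ)*c^4*s^3*B + (-1/6 : ℝ)*c^4*s^3*t^2*D + (5/3 : ℝ)*c^4*s^3*t^2*B + (1/9 : ℝ)*c^4*s^3*t^4*D + (1/6 : ℝ)*c^5*C + (-5/3 : ℝ)*c^5*s^2*C + (-7/12 : ℝ)*c^5*s^2*A + (-5/6 : ℝ)*c^5*s^2*t^2*C + (1/4 : ℝ)*c^6*s*D + (1/2 : ℝ)*c^6*s*B + (1/9 : ℝ)*c^6*s*t^2*D + (-1/12 : ℝ)*c^7*C) * ht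


lemma lamsum_identity (c s t : ℝ) (hcs : c^2 + s^2 = 1) (ht : t^2 = 3) :
    (4*c^2-1)^2/9 + (4*(-c/2 - t*s/2)^2-1)^2/9 + (4*(-c/2 + t*s/2)^2-1)^2/9 = 1 := by
  linear_combination ((2/3 : ℝ) + (2 : ℝ)*s^2 + (2 : ℝ)*c^2) * hcs +
    ((-4/9 : ℝ)*s^2 + (2/3 : ℝ)*s^4 + (2/9 : ℝ)*s^4*t^2 + (4/3 : ℝ)*c^2*s^2) * ht

set_option maxHeartbeats 2000000 in
lemma core2d (A B C D τ : ℝ)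
    (h : ∀ x y : ℝ, x^2 + y^2 = 1 → |A*x^3 + 3*B*x^2*y + 3*C*x*y^2 + D*y^3| ≤ τ) :
    A^2 + B^2 ≤ τ^2 := by
  have hτ : 0 ≤ τ := le_trans (abs_nonneg _) (by simpa using h 1 0 (by norm_num))
  rcases eq_or_ne (A^2 + B^2) 0 with h0 | h0
  · rw [h0]; positivity
  set r : ℝ := Real.sqrt (A^2 + B^2) with hrdef
  have hr2 : r^2 = A^2 + B^2 := Real.sq_sqrt (by positivity)
  have hrpos : 0 < r := Real.sqrt_pos.2 (lt_of_le_of_ne (by positivity) (Ne.symm h0))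
  set z : ℂ := ⟨A, B⟩ with hzdef
  have hz : z ≠ 0 := by
    intro hc
    apply h0
    have hA : A = 0 := congrArg Complex.re hc
    have hB : B = 0 := congrArg Complex.im hc
    rw [hA, hB]; ring
  have habs : ‖z‖ = r := by
    rw [Complex.norm_def, Complex.normSq_mk]
    rw [hrdef]; ring_nf
  have hcos : Real.cos (Complex.arg z) = A / r := by
    rw [Complex.cos_arg hz, habs]
  have hsin : Real.sin (Complex.arg z) = B / r := by
    rw [Complex.sin_arg, habs]
  set β : ℝ := Complex.arg z / 3 with hβ
  set c : ℝ := Real.cos β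
  set s : ℝ := Real.sin β
  have hcs : c^2 + s^2 = 1 := by
    have := Real.sin_sq_add_cos_sq β; linarith
  set t : ℝ := Real.sqrt 3 with htdef
  have ht : t^2 = 3 := Real.sq_sqrt (by norm_num)
  have h3 : (3 : ℝ) * β = Complex.arg z := by rw [hβ]; ring
  have hc3 : 4*c^3 - 3*c = A / r := by
    rw [← hcos, ← h3, Real.cos_three_mul]
  have hs3 : 3*s - 4*s^3 = B / r := by
    rw [← hsin, ← h3, Real.sin_three_mul]
  -- the three points
  have c23 : Real.cos (2 * Real.pi / 3) = -(1/2) := by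
    have : 2 * Real.pi / 3 = Real.pi - Real.pi / 3 := by ring
    rw [this, Real.cos_pi_sub, Real.cos_pi_div_three]
  have s23 : Real.sin (2 * Real.pi / 3) = t / 2 := by
    have : 2 * Real.pi / 3 = Real.pi - Real.pi / 3 := by ring
    rw [this, Real.sin_pi_sub, Real.sin_pi_div_three, htdef]
  have hx1 : Real.cos (β + 2 * Real.pi / 3) = -c/2 - t*s/2 := by
    rw [Real.cos_add, c23, s23]; ring
  have hy1 : Real.sin (β + 2 * Real.pi / 3) = -s/2 + t*c/2 := by
    rw [Real.sin_add, c23, s23]; ring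
  have hx2 : Real.cos (β - 2 * Real.pi / 3) = -c/2 + t*s/2 := by
    rw [Real.cos_sub, c23, s23]; ring
  have hy2 : Real.sin (β - 2 * Real.pi / 3) = -s/2 - t*c/2 := by
    rw [Real.sin_sub, c23, s23]; ring
  have unit : ∀ θ : ℝ, (Real.cos θ)^2 + (Real.sin θ)^2 = 1 := by
    intro θ; have := Real.sin_sq_add_cos_sq θ; linarith
  have h0' := h c s hcs
  have h1' := h (-c/2 - t*s/2) (-s/2 + t*c/2) (by rw [← hx1, ← hy1]; exact unit _)
  have h2' := h (-c/2 + t*s/2) (-s/2 - t*c/2) (by rw [← hx2, ← hy2]; exact unit _)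
  have key := core_identity c s t A B C D hcs ht
  have hrhs : (4*c^3 - 3*c)*A + (3*s - 4*s^3)*B = r := by
    rw [hc3, hs3]
    field_simp
    linarith [hr2]
  rw [hrhs] at key
  -- now bound each term
  set l0 : ℝ := (4*c^2-1)^2/9 with hl0
  set l1 : ℝ := (4*(-c/2 - t*s/2)^2-1)^2/9 with hl1
  set l2 : ℝ := (4*(-c/2 + t*s/2)^2-1)^2/9 with hl2
  have hsum := lamsum_identity c s t hcs ht
  rw [← hl0, ← hl1, ← hl2] at hsum
  have pl0 : (0:ℝ) ≤ l0 := by rw [hl0]; positivity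
  have pl1 : (0:ℝ) ≤ l1 := by rw [hl1]; positivity
  have pl2 : (0:ℝ) ≤ l2 := by rw [hl2]; positivity
  have b0 : A*c^3 + 3*B*c^2*s + 3*C*c*s^2 + D*s^3 ≤ τ := le_trans (le_abs_self _) h0'
  have b1 : A*(-c/2 - t*s/2)^3 + 3*B*(-c/2 - t*s/2)^2*(-s/2 + t*c/2) +
      3*C*(-c/2 - t*s/2)*(-s/2 + t*c/2)^2 + D*(-s/2 + t*c/2)^3 ≤ τ :=
    le_trans (le_abs_self _) h1'
  have b2 : A*(-c/2 + t*s/2)^3 + 3*B*(-c/2 + t*s/2)^2*(-s/2 - t*c/2) +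
      3*C*(-c/2 + t*s/2)*(-s/2 - t*c/2)^2 + D*(-s/2 - t*c/2)^3 ≤ τ :=
    le_trans (le_abs_self _) h2'
  have m0 := mul_le_mul_of_nonneg_left b0 pl0
  have m1 := mul_le_mul_of_nonneg_left b1 pl1
  have m2 := mul_le_mul_of_nonneg_left b2 pl2
  have hτsum : l0*τ + l1*τ + l2*τ = τ := by linear_combination τ * hsum
  have hrτ : r ≤ τ := by linarith [key, m0, m1, m2, hτsum]
  calc A^2 + B^2 = r^2 := hr2.symm
    _ ≤ τ^2 := pow_le_pow_left₀ (Real.sqrt_nonneg _) hrτ 2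

namespace TensorAux

variable {p : ℕ}

/-- The trilinear form of the tensor. -/
def tri (T : Fin p → Fin p → Fin p → ℝ) (u v w : Fin p → ℝ) : ℝ :=
  ∑ i, ∑ j, ∑ k, T i j k * u i * v j * w k

lemma euclNorm_nonneg (v : Fin p → ℝ) : 0 ≤ euclNorm v := Real.sqrt_nonneg _

lemma euclNorm_sq (v : Fin p → ℝ) : euclNorm v ^ 2 = ∑ i, v i ^ 2 :=
  Real.sq_sqrt (by positivity)

lemma eq_zero_of_euclNorm_eq_zero {v : Fin p → ℝ} (h : euclNorm v = 0) : v = 0 := by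
  have h2 : ∑ i, v i ^ 2 = 0 := by
    have := euclNorm_sq v
    rw [h] at this
    simpa using this.symm
  funext i
  have := (Finset.sum_eq_zero_iff_of_nonneg (fun i _ => sq_nonneg (v i))).1 h2 i (by simp)
  exact pow_eq_zero_iff (by norm_num) |>.1 this

lemma euclNorm_smul (a : ℝ) (v : Fin p → ℝ) :
    euclNorm (fun i => a * v i) = |a| * euclNorm v := by
  unfold euclNorm
  rw [← Real.sqrt_sq_eq_abs, ← Real.sqrt_mul (sq_nonneg a)]
  congr 1
  rw [Finset.mul_sum]
  exact Finset.sum_congr rfl fun i _ => by ring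

section tri

variable {T : Fin p → Fin p → Fin p → ℝ}

lemma tri_swap12 (hsym : ∀ i j k, T i j k = T j i k ∧ T i j k = T i k j)
    (u v w : Fin p → ℝ) : tri T u v w = tri T v u w := by
  unfold tri
  rw [Finset.sum_comm]
  refine Finset.sum_congr rfl fun i _ => Finset.sum_congr rfl fun j _ =>
    Finset.sum_congr rfl fun k _ => ?_
  rw [(hsym j i k).1]
  ring

lemma tri_swap23 (hsym : ∀ i j k, T i j k = T j i k ∧ T i j k = T i k j)
    (u v w : Fin p → ℝ) : tri T u v w = tri T u w v := by
  unfold tri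
  refine Finset.sum_congr rfl fun i _ => ?_
  rw [Finset.sum_comm]
  refine Finset.sum_congr rfl fun j _ => Finset.sum_congr rfl fun k _ => ?_
  rw [(hsym i j k).2]
  ring

lemma tri_comb_left (x y : ℝ) (a b v w : Fin p → ℝ) :
    tri T (fun i => x * a i + y * b i) v w = x * tri T a v w + y * tri T b v w := by
  unfold tri
  simp only [Finset.mul_sum, ← Finset.sum_add_distrib]
  exact Finset.sum_congr rfl fun i _ => Finset.sum_congr rfl fun j _ =>
    Finset.sum_congr rfl fun k _ => by ring

lemma tri_comb_mid (x y : ℝ) (a b v w : Fin p → ℝ) :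
    tri T v (fun i => x * a i + y * b i) w = x * tri T v a w + y * tri T v b w := by
  unfold tri
  simp only [Finset.mul_sum, ← Finset.sum_add_distrib]
  exact Finset.sum_congr rfl fun i _ => Finset.sum_congr rfl fun j _ =>
    Finset.sum_congr rfl fun k _ => by ring

lemma tri_comb_right (x y : ℝ) (a b v w : Fin p → ℝ) :
    tri T v w (fun i => x * a i + y * b i) = x * tri T v w a + y * tri T v w b := by
  unfold tri
  simp only [Finset.mul_sum, ← Finset.sum_add_distrib]
  exact Finset.sum_congr rfl fun i _ => Finset.sum_congr rfl fun j _ =>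
    Finset.sum_congr rfl fun k _ => by ring

lemma tri_smul_left (x : ℝ) (a v w : Fin p → ℝ) :
    tri T (fun i => x * a i) v w = x * tri T a v w := by
  unfold tri
  simp only [Finset.mul_sum]
  exact Finset.sum_congr rfl fun i _ => Finset.sum_congr rfl fun j _ =>
    Finset.sum_congr rfl fun k _ => by ring

lemma tri_smul_mid (x : ℝ) (a v w : Fin p → ℝ) :
    tri T v (fun i => x * a i) w = x * tri T v a w := by
  unfold tri
  simp only [Finset.mul_sum]
  exact Finset.sum_congr rfl fun i _ => Finset.sum_congr rfl fun j _ =>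
    Finset.sum_congr rfl fun k _ => by ring

lemma tri_smul_right (x : ℝ) (a v w : Fin p → ℝ) :
    tri T v w (fun i => x * a i) = x * tri T v w a := by
  unfold tri
  simp only [Finset.mul_sum]
  exact Finset.sum_congr rfl fun i _ => Finset.sum_congr rfl fun j _ =>
    Finset.sum_congr rfl fun k _ => by ring

lemma tri_cube (hsym : ∀ i j k, T i j k = T j i k ∧ T i j k = T i k j)
    (x y : ℝ) (v w : Fin p → ℝ) :
    tri T (fun i => x * v i + y * w i) (fun i => x * v i + y * w i)
      (fun i => x * v i + y * w i) =
    x^3 * tri T v v v + 3*(x^2*y) * tri T v v w + 3*(x*y^2) * tri T v w w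
      + y^3 * tri T w w w := by
  have h1 : tri T v w v = tri T v v w := by
    rw [tri_swap23 hsym]
  have h2 : tri T w v v = tri T v v w := by
    rw [tri_swap12 hsym, tri_swap23 hsym]
  have h3 : tri T w v w = tri T v w w := by
    rw [tri_swap12 hsym]
  have h4 : tri T w w v = tri T v w w := by
    rw [tri_swap23 hsym, tri_swap12 hsym]
  rw [tri_comb_left, tri_comb_mid, tri_comb_mid, tri_comb_right, tri_comb_right,
    tri_comb_right, tri_comb_right, h1, h2, h3, h4]
  ring

end tri

/-- If `|α| * t ≤ C` for all `t ≥ 1` then `α = 0`. -/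
lemma zero_of_abs_mul_le {α C : ℝ} (h : ∀ t : ℝ, 1 ≤ t → |α| * t ≤ C) : α = 0 := by
  by_contra hα
  have h1 : 0 < |α| := abs_pos.2 hα
  have hC : |α| ≤ C := by simpa using h 1 le_rfl
  have ht : (1:ℝ) ≤ (C + 1) / |α| := by
    rw [le_div_iff₀ h1]
    linarith
  have := h _ ht
  rw [mul_div_cancel₀ _ (ne_of_gt h1)] at this
  linarith

lemma habs3 (x y z : ℝ) : |x| ≤ |x + y + z| + |y| + |z| := by
  have h1 : x = x + y + z + -y + -z := by ring
  calc |x| = |x + y + z + -y + -z| := by rw [← h1]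
    _ ≤ |x + y + z + -y| + |(-z)| := abs_add_le _ _
    _ ≤ (|x + y + z| + |(-y)|) + |(-z)| := by
        have := abs_add_le (x + y + z) (-y)
        linarith
    _ = |x + y + z| + |y| + |z| := by rw [abs_neg, abs_neg]

/-- A cubic polynomial (without constant term) bounded on `[1, ∞)` has zero coefficients. -/
lemma cubic_coeffs_zero {a b c C : ℝ}
    (h : ∀ t : ℝ, 1 ≤ t → |a*t^3 + b*t^2 + c*t| ≤ C) : a = 0 ∧ b = 0 ∧ c = 0 := by
  have hC : 0 ≤ C := le_trans (abs_nonneg _) (h 1 le_rfl)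
  have ha : a = 0 := by
    refine zero_of_abs_mul_le (C := C + |b| + |c|) fun t ht => ?_
    have ht0 : (0:ℝ) < t := lt_of_lt_of_le one_pos ht
    have ht2 : (1:ℝ) ≤ t^2 := by nlinarith
    have e1 : |a*t^3| ≤ |a*t^3 + b*t^2 + c*t| + |b*t^2| + |c*t| := habs3 _ _ _
    have e2 : |a*t^3| = (|a| * t)*t^2 := by
      rw [abs_mul, abs_of_pos (pow_pos ht0 3)]; ring
    have e3 : |b*t^2| = |b| * t^2 := by rw [abs_mul, abs_of_pos (pow_pos ht0 2)]
    have e4 : |c*t| = |c| * t := by rw [abs_mul, abs_of_pos ht0]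
    have ht' : t ≤ t^2 := by nlinarith
    have e5 : (|a| * t)*t^2 ≤ (C + |b| + |c|)*t^2 := by
      have i1 : C ≤ C*t^2 := le_mul_of_one_le_right hC ht2
      have i2 : |c| * t ≤ |c| * t^2 := mul_le_mul_of_nonneg_left ht' (abs_nonneg c)
      have i3 := h t ht
      rw [e2, e3, e4] at e1
      nlinarith [abs_nonneg b]
    exact le_of_mul_le_mul_right e5 (by positivity)
  have hb : b = 0 := by
    refine zero_of_abs_mul_le (C := C + |c|) fun t ht => ?_
    have ht0 : (0:ℝ) < t := lt_of_lt_of_le one_pos ht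
    have e1 : |b*t^2| ≤ |a*t^3 + b*t^2 + c*t| + |a*t^3| + |c*t| := by
      have := habs3 (b*t^2) (a*t^3) (c*t)
      have hre : b*t^2 + a*t^3 + c*t = a*t^3 + b*t^2 + c*t := by ring
      rw [hre] at this
      linarith
    have e2 : |b*t^2| = (|b| * t)*t := by
      rw [abs_mul, abs_of_pos (pow_pos ht0 2)]; ring
    have e4 : |c*t| = |c| * t := by rw [abs_mul, abs_of_pos ht0]
    have ea : |a*t^3| = 0 := by rw [ha]; simp
    have e5 : (|b| * t)*t ≤ (C + |c|)*t := by
      have i1 : C ≤ C*t := le_mul_of_one_le_right hC ht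
      have i3 := h t ht
      rw [e2, e4, ea] at e1
      nlinarith [abs_nonneg c]
    exact le_of_mul_le_mul_right e5 ht0
  have hc : c = 0 := by
    refine zero_of_abs_mul_le (C := C) fun t ht => ?_
    have ht0 : (0:ℝ) < t := lt_of_lt_of_le one_pos ht
    have e4 : |c*t| = |c| * t := by rw [abs_mul, abs_of_pos ht0]
    have i3 := h t ht
    rw [ha, hb] at i3
    have : |c*t| ≤ C := by
      have hre : (0:ℝ)*t^3 + 0*t^2 + c*t = c*t := by ring
      rw [hre] at i3
      exact i3
    rw [e4] at this
    exact this
  exact ⟨ha, hb, hc⟩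
/-- If `Γ z = 0`, the trilinear form vanishes whenever `z` appears. -/
lemma tri_ker {T : Fin p → Fin p → Fin p → ℝ} {Γ : Matrix (Fin p) (Fin p) ℝ} {τ : ℝ}
    (hsym : ∀ i j k, T i j k = T j i k ∧ T i j k = T i k j)
    (hT : ∀ u, |tri T u u u| ≤ τ * euclNorm (Γ.mulVec u) ^ 3)
    {z w : Fin p → ℝ} (hz : Γ.mulVec z = 0) :
    tri T z z w = 0 ∧ tri T z w w = 0 := by
  have key : ∀ t : ℝ, 1 ≤ t →
      |(tri T z z z)*t^3 + (3*(tri T z z w))*t^2 + (3*(tri T z w w))*t|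
        ≤ τ * euclNorm (Γ.mulVec w) ^ 3 + |tri T w w w| := by
    intro t ht
    have hcube := tri_cube hsym t 1 z w
    have hmv : Γ.mulVec (fun i => t * z i + 1 * w i) = Γ.mulVec w := by
      have hfn : (fun i => t * z i + 1 * w i) = t • z + w := by
        funext i; simp
      rw [hfn, Matrix.mulVec_add, Matrix.mulVec_smul, hz, smul_zero, zero_add]
    have h1 := hT (fun i => t * z i + 1 * w i)
    rw [hcube, hmv] at h1
    have hre : (tri T z z z)*t^3 + (3*(tri T z z w))*t^2 + (3*(tri T z w w))*t =
        (t^3 * tri T z z z + 3*(t^2*1) * tri T z z w + 3*(t*1^2) * tri T z w w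
          + 1^3 * tri T w w w) + (-(tri T w w w)) := by ring
    calc |(tri T z z z)*t^3 + (3*(tri T z z w))*t^2 + (3*(tri T z w w))*t|
        ≤ |t^3 * tri T z z z + 3*(t^2*1) * tri T z z w + 3*(t*1^2) * tri T z w w
            + 1^3 * tri T w w w| + |(-(tri T w w w))| := by
          rw [hre]; exact abs_add_le _ _
      _ ≤ τ * euclNorm (Γ.mulVec w) ^ 3 + |tri T w w w| := by
          rw [abs_neg]; linarith
  obtain ⟨h0, h1, h2⟩ := cubic_coeffs_zero key
  exact ⟨by linarith, by linarith⟩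

/-- Polar bound, normalized case. -/
lemma polar_unit {T : Fin p → Fin p → Fin p → ℝ} {Γ : Matrix (Fin p) (Fin p) ℝ} {τ : ℝ}
    (hsym : ∀ i j k, T i j k = T j i k ∧ T i j k = T i k j) (hτ : 0 < τ)
    (hT : ∀ u, |tri T u u u| ≤ τ * euclNorm (Γ.mulVec u) ^ 3)
    {u v : Fin p → ℝ} (hu : euclNorm (Γ.mulVec u) = 1)
    (hv : euclNorm (Γ.mulVec v) = 1) : |tri T u v v| ≤ τ := by
  set a := Γ.mulVec u with ha
  set b := Γ.mulVec v with hb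
  set c : ℝ := ∑ i, a i * b i with hc
  set w' : Fin p → ℝ := fun i => u i - c * v i with hw'
  have hmvw' : Γ.mulVec w' = fun i => a i - c * b i := by
    have hfn : w' = u - c • v := by funext i; simp [hw']
    rw [hfn, Matrix.mulVec_sub, Matrix.mulVec_smul]
    funext i
    simp [ha, hb]
  have ha2 : ∑ i, a i ^ 2 = 1 := by
    rw [← euclNorm_sq, hu]; norm_num
  have hb2 : ∑ i, b i ^ 2 = 1 := by
    rw [← euclNorm_sq, hv]; norm_num
  set s := euclNorm (Γ.mulVec w') with hs
  have hs2 : s^2 = 1 - c^2 := by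
    calc s^2 = ∑ i, (a i - c * b i)^2 := by rw [hs, euclNorm_sq, hmvw']
      _ = ∑ i, (a i^2 - 2*c*(a i * b i) + c^2 * b i^2) :=
          Finset.sum_congr rfl fun i _ => by ring
      _ = (∑ i, a i^2) - (∑ i, 2*c*(a i * b i)) + (∑ i, c^2 * b i^2) := by
          rw [Finset.sum_add_distrib, Finset.sum_sub_distrib]
      _ = (∑ i, a i^2) - 2*c*(∑ i, a i * b i) + c^2*(∑ i, b i^2) := by
          rw [← Finset.mul_sum, ← Finset.mul_sum]
      _ = 1 - c^2 := by rw [ha2, hb2, ← hc]; ring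
  have hsnn : 0 ≤ s := euclNorm_nonneg _
  have hc2 : c^2 ≤ 1 := by nlinarith
  by_cases hs0 : s = 0
  · have hker : Γ.mulVec w' = 0 := eq_zero_of_euclNorm_eq_zero (by rw [← hs]; exact hs0)
    have hz : tri T w' v v = 0 := (tri_ker hsym hT hker).2
    have hu' : u = fun i => c * v i + 1 * w' i := by
      funext i; simp [hw']
    have hexp : tri T u v v = c * tri T v v v + 1 * tri T w' v v := by
      rw [hu']; exact tri_comb_left _ _ _ _ _ _
    have hTv := hT v
    rw [← hb, hv] at hTv
    norm_num at hTv
    have hcabs : |c| ≤ 1 := by nlinarith [sq_abs c, abs_nonneg c]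
    rw [hexp, hz]
    rw [mul_zero, add_zero, abs_mul]
    calc |c| * |tri T v v v| ≤ 1 * τ := by
          apply mul_le_mul hcabs hTv (abs_nonneg _) zero_le_one
      _ = τ := one_mul τ
  · have hspos : 0 < s := lt_of_le_of_ne hsnn (Ne.symm hs0)
    set w : Fin p → ℝ := fun i => s⁻¹ * w' i with hw
    have hmvw : Γ.mulVec w = fun i => s⁻¹ * (Γ.mulVec w') i := by
      have hfn : w = s⁻¹ • w' := by funext i; simp [hw]
      rw [hfn, Matrix.mulVec_smul]
      funext i; simp
    have hnw : euclNorm (Γ.mulVec w) = 1 := by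
      rw [hmvw, euclNorm_smul, ← hs, abs_of_pos (inv_pos.2 hspos),
        inv_mul_cancel₀ hs0]
    have hg2 : ∑ i, (Γ.mulVec w) i ^ 2 = 1 := by
      rw [← euclNorm_sq, hnw]; norm_num
    have hGwb : ∑ i, b i * (Γ.mulVec w) i = 0 := by
      rw [hmvw]
      calc ∑ i, b i * (s⁻¹ * (Γ.mulVec w') i)
          = s⁻¹ * ∑ i, (a i * b i - c * b i ^ 2) := by
            rw [Finset.mul_sum, hmvw']
            exact Finset.sum_congr rfl fun i _ => by ring
        _ = s⁻¹ * ((∑ i, a i * b i) - ∑ i, c * b i ^ 2) := by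
            rw [Finset.sum_sub_distrib]
        _ = s⁻¹ * ((∑ i, a i * b i) - c * ∑ i, b i ^ 2) := by
            rw [← Finset.mul_sum]
        _ = 0 := by rw [← hc, hb2]; ring
    have h2d : ∀ x y : ℝ, x^2 + y^2 = 1 →
        |(tri T v v v)*x^3 + 3*(tri T v v w)*x^2*y + 3*(tri T v w w)*x*y^2
          + (tri T w w w)*y^3| ≤ τ := by
      intro x y hxy
      have hcube := tri_cube hsym x y v w
      have hTz := hT (fun i => x * v i + y * w i)
      rw [hcube] at hTz
      have hmvz : Γ.mulVec (fun i => x * v i + y * w i)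
          = fun i => x * b i + y * (Γ.mulVec w) i := by
        have hfn : (fun i => x * v i + y * w i) = x • v + y • w := by
          funext i; simp
        rw [hfn, Matrix.mulVec_add, Matrix.mulVec_smul, Matrix.mulVec_smul]
        funext i; simp [hb]
      have hnz2 : euclNorm (Γ.mulVec (fun i => x * v i + y * w i)) ^ 2 = 1 := by
        rw [euclNorm_sq, hmvz]
        calc ∑ i, (x * b i + y * (Γ.mulVec w) i)^2
            = ∑ i, (x^2 * b i^2 + 2*(x*y)*(b i * (Γ.mulVec w) i)
                + y^2 * (Γ.mulVec w) i^2) :=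
              Finset.sum_congr rfl fun i _ => by ring
          _ = x^2 * (∑ i, b i^2) + 2*(x*y)*(∑ i, b i * (Γ.mulVec w) i)
                + y^2 * (∑ i, (Γ.mulVec w) i^2) := by
              rw [Finset.sum_add_distrib, Finset.sum_add_distrib,
                ← Finset.mul_sum, ← Finset.mul_sum, ← Finset.mul_sum]
          _ = 1 := by rw [hb2, hGwb, hg2]; linarith [hxy]
      have hnz : euclNorm (Γ.mulVec (fun i => x * v i + y * w i)) = 1 := by
        have hnn := euclNorm_nonneg (Γ.mulVec (fun i => x * v i + y * w i))
        nlinarith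
      rw [hnz] at hTz
      norm_num at hTz
      have hre : (tri T v v v)*x^3 + 3*(tri T v v w)*x^2*y + 3*(tri T v w w)*x*y^2
          + (tri T w w w)*y^3
          = x^3 * tri T v v v + 3*(x^2*y) * tri T v v w + 3*(x*y^2) * tri T v w w
          + y^3 * tri T w w w := by ring
      rw [hre]
      exact hTz
    have hAB := core2d (tri T v v v) (tri T v v w) (tri T v w w) (tri T w w w) τ h2d
    have hu' : u = fun i => c * v i + s * w i := by
      funext i
      simp only [hw, hw']
      field_simp
      ring
    have hexp : tri T u v v = c * tri T v v v + s * tri T w v v := by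
      rw [hu']; exact tri_comb_left _ _ _ _ _ _
    have hwB : tri T w v v = tri T v v w := by
      rw [tri_swap12 hsym, tri_swap23 hsym]
    rw [hexp, hwB]
    have hcs1 : c^2 + s^2 = 1 := by linarith
    set A := tri T v v v
    set B := tri T v v w
    have e : (c*A + s*B)^2 = (c^2+s^2)*(A^2+B^2) - (c*B - s*A)^2 := by ring
    have hsq : (c*A + s*B)^2 ≤ τ^2 := by
      rw [e, hcs1, one_mul]
      have := sq_nonneg (c*B - s*A)
      linarith
    exact abs_le_of_sq_le_sq hsq hτ.le

/-- Polar bound: `|T(u,v,v)| ≤ τ ‖Γu‖ ‖Γv‖²`. -/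
lemma polar {T : Fin p → Fin p → Fin p → ℝ} {Γ : Matrix (Fin p) (Fin p) ℝ} {τ : ℝ}
    (hsym : ∀ i j k, T i j k = T j i k ∧ T i j k = T i k j) (hτ : 0 < τ)
    (hT : ∀ u, |tri T u u u| ≤ τ * euclNorm (Γ.mulVec u) ^ 3)
    (u v : Fin p → ℝ) :
    |tri T u v v| ≤ τ * euclNorm (Γ.mulVec u) * euclNorm (Γ.mulVec v) ^ 2 := by
  set nu := euclNorm (Γ.mulVec u) with hnu
  set nv := euclNorm (Γ.mulVec v) with hnv
  have hnu0 : 0 ≤ nu := euclNorm_nonneg _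
  have hnv0 : 0 ≤ nv := euclNorm_nonneg _
  by_cases hu0 : nu = 0
  · have hker : Γ.mulVec u = 0 := eq_zero_of_euclNorm_eq_zero (by rw [← hnu]; exact hu0)
    have hz : tri T u v v = 0 := (tri_ker hsym hT hker).2
    rw [hz, hu0]
    simp
  by_cases hv0 : nv = 0
  · have hker : Γ.mulVec v = 0 := eq_zero_of_euclNorm_eq_zero (by rw [← hnv]; exact hv0)
    have hz : tri T v v u = 0 := (tri_ker hsym hT hker).1
    have hswap : tri T u v v = tri T v v u := by
      rw [tri_swap12 hsym, tri_swap23 hsym]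
    rw [hswap, hz, hv0]
    simp
  have hnup : 0 < nu := lt_of_le_of_ne hnu0 (Ne.symm hu0)
  have hnvp : 0 < nv := lt_of_le_of_ne hnv0 (Ne.symm hv0)
  have hu1 : euclNorm (Γ.mulVec (fun i => nu⁻¹ * u i)) = 1 := by
    have hfn : (fun i => nu⁻¹ * u i) = nu⁻¹ • u := by funext i; simp
    rw [hfn, Matrix.mulVec_smul]
    have : (nu⁻¹ • Γ.mulVec u) = fun i => nu⁻¹ * (Γ.mulVec u) i := by funext i; simp
    rw [this, euclNorm_smul, ← hnu, abs_of_pos (inv_pos.2 hnup), inv_mul_cancel₀ hu0]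
  have hv1 : euclNorm (Γ.mulVec (fun i => nv⁻¹ * v i)) = 1 := by
    have hfn : (fun i => nv⁻¹ * v i) = nv⁻¹ • v := by funext i; simp
    rw [hfn, Matrix.mulVec_smul]
    have : (nv⁻¹ • Γ.mulVec v) = fun i => nv⁻¹ * (Γ.mulVec v) i := by funext i; simp
    rw [this, euclNorm_smul, ← hnv, abs_of_pos (inv_pos.2 hnvp), inv_mul_cancel₀ hv0]
  have hpu := polar_unit hsym hτ hT hu1 hv1
  have hexp : tri T (fun i => nu⁻¹ * u i) (fun i => nv⁻¹ * v i) (fun i => nv⁻¹ * v i)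
      = nu⁻¹ * (nv⁻¹ * (nv⁻¹ * tri T u v v)) := by
    rw [tri_smul_left, tri_smul_mid, tri_smul_right]
  rw [hexp] at hpu
  have habs : |nu⁻¹ * (nv⁻¹ * (nv⁻¹ * tri T u v v))|
      = nu⁻¹ * nv⁻¹ * nv⁻¹ * |tri T u v v| := by
    rw [abs_mul, abs_mul, abs_mul, abs_of_pos (inv_pos.2 hnup),
      abs_of_pos (inv_pos.2 hnvp)]
    ring
  rw [habs] at hpu
  calc |tri T u v v| = (nu * nv * nv) * (nu⁻¹ * nv⁻¹ * nv⁻¹ * |tri T u v v|) := by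
        field_simp
    _ ≤ (nu * nv * nv) * τ := by
        apply mul_le_mul_of_nonneg_left hpu (by positivity)
    _ = τ * nu * nv^2 := by ring

lemma parseval {p : ℕ} (b : OrthonormalBasis (Fin p) ℝ (EuclideanSpace ℝ (Fin p)))
    (y : Fin p → ℝ) :
    ∑ r, (∑ i, y i * b r i) ^ 2 = ∑ i, y i ^ 2 := by
  have h := b.sum_inner_mul_inner (x := (WithLp.toLp 2 y : EuclideanSpace ℝ (Fin p)))
    (y := (WithLp.toLp 2 y : EuclideanSpace ℝ (Fin p)))
  simp only [PiLp.inner_apply, RCLike.inner_apply, conj_trivial] at h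
  calc ∑ r, (∑ i, y i * b r i) ^ 2
      = ∑ r, (∑ i, y i * b r i) * (∑ i, b r i * y i) := by
        refine Finset.sum_congr rfl fun r _ => ?_
        rw [sq]
        congr 1
        exact Finset.sum_congr rfl fun i _ => mul_comm _ _
    _ = ∑ i, y i * y i := by
        rw [← h]; exact Finset.sum_congr rfl fun r _ => mul_comm _ _
    _ = ∑ i, y i ^ 2 := Finset.sum_congr rfl fun i _ => (sq (y i)).symm

lemma basis_unit {p : ℕ} (b : OrthonormalBasis (Fin p) ℝ (EuclideanSpace ℝ (Fin p)))
    (r : Fin p) : ∑ i, b r i ^ 2 = 1 := by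
  have h := b.orthonormal.1 r
  have h2 : (inner ℝ (b r) (b r) : ℝ) = 1 := by
    rw [real_inner_self_eq_norm_sq, h]
    norm_num
  simp only [PiLp.inner_apply, RCLike.inner_apply, conj_trivial] at h2
  calc ∑ i, b r i ^ 2 = ∑ i, b r i * b r i :=
        Finset.sum_congr rfl fun i _ => sq (b r i)
    _ = 1 := h2

lemma matrix_bound {p : ℕ} (M B : Matrix (Fin p) (Fin p) ℝ) (hM : M.IsSymm) (c : ℝ)
    (h : ∀ v : Fin p → ℝ, |v ⬝ᵥ M.mulVec v| ≤ c * (v ⬝ᵥ B.mulVec v)) :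
    ∑ j, ∑ k, M j k ^ 2 ≤ c ^ 2 * ∑ j, ∑ k, B j k ^ 2 := by
  have hH : M.IsHermitian := by
    rw [Matrix.IsHermitian, Matrix.conjTranspose_eq_transpose_of_trivial]
    exact hM
  set b := hH.eigenvectorBasis with hb
  set μ := hH.eigenvalues with hμ
  have heig : ∀ r, M.mulVec (b r) = fun i => μ r * b r i := by
    intro r
    have h1 := hH.mulVec_eigenvectorBasis r
    funext i
    have h2 := congrFun h1 i
    simpa using h2
  have hμval : ∀ r, (b r : Fin p → ℝ) ⬝ᵥ M.mulVec (b r) = μ r := by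
    intro r
    rw [heig r]
    calc (b r : Fin p → ℝ) ⬝ᵥ (fun i => μ r * b r i)
        = ∑ i, b r i * (μ r * b r i) := rfl
      _ = μ r * ∑ i, b r i ^2 := by
          rw [Finset.mul_sum]
          exact Finset.sum_congr rfl fun i _ => by ring
      _ = μ r := by rw [basis_unit b r, mul_one]
  -- Frobenius norm of M equals sum of eigenvalue squares
  have hfro : ∑ j, ∑ k, M j k ^ 2 = ∑ r, μ r ^ 2 := by
    calc ∑ j, ∑ k, M j k ^ 2
        = ∑ j, ∑ r, (∑ k, M j k * b r k) ^ 2 := by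
          exact Finset.sum_congr rfl fun j _ => (parseval b (fun k => M j k)).symm
      _ = ∑ r, ∑ j, (∑ k, M j k * b r k) ^ 2 := Finset.sum_comm
      _ = ∑ r, ∑ j, (M.mulVec (b r) j) ^ 2 := rfl
      _ = ∑ r, ∑ j, (μ r * b r j) ^ 2 := by
          refine Finset.sum_congr rfl fun r _ => Finset.sum_congr rfl fun j _ => ?_
          rw [heig r]
      _ = ∑ r, μ r ^ 2 * ∑ j, b r j ^ 2 := by
          refine Finset.sum_congr rfl fun r _ => ?_
          rw [Finset.mul_sum]
          exact Finset.sum_congr rfl fun j _ => by ring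
      _ = ∑ r, μ r ^ 2 := by
          refine Finset.sum_congr rfl fun r _ => ?_
          rw [basis_unit b r, mul_one]
  have hBfro : ∑ r, ∑ i, (B.mulVec (b r) i) ^ 2 = ∑ i, ∑ k, B i k ^ 2 := by
    rw [Finset.sum_comm]
    exact Finset.sum_congr rfl fun i _ => parseval b (fun k => B i k)
  have hstep : ∀ r, μ r ^ 2 ≤ c ^ 2 * ∑ i, (B.mulVec (b r) i) ^ 2 := by
    intro r
    have h1 : |μ r| ≤ c * ((b r : Fin p → ℝ) ⬝ᵥ B.mulVec (b r)) := by
      rw [← hμval r]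
      exact h (b r)
    have h2 : ((b r : Fin p → ℝ) ⬝ᵥ B.mulVec (b r)) ^ 2
        ≤ ∑ i, (B.mulVec (b r) i) ^ 2 := by
      have hcs := Finset.sum_mul_sq_le_sq_mul_sq Finset.univ
        (fun i => (b r : Fin p → ℝ) i) (fun i => B.mulVec (b r) i)
      rw [basis_unit b r, one_mul] at hcs
      exact hcs
    have h3 : μ r ^ 2 ≤ (c * ((b r : Fin p → ℝ) ⬝ᵥ B.mulVec (b r))) ^ 2 := by
      rw [← sq_abs (μ r)]
      have hnn : 0 ≤ c * ((b r : Fin p → ℝ) ⬝ᵥ B.mulVec (b r)) :=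
        le_trans (abs_nonneg _) h1
      exact pow_le_pow_left₀ (abs_nonneg _) h1 2
    calc μ r ^ 2 ≤ (c * ((b r : Fin p → ℝ) ⬝ᵥ B.mulVec (b r))) ^ 2 := h3
      _ = c ^ 2 * ((b r : Fin p → ℝ) ⬝ᵥ B.mulVec (b r)) ^ 2 := by ring
      _ ≤ c ^ 2 * ∑ i, (B.mulVec (b r) i) ^ 2 :=
          mul_le_mul_of_nonneg_left h2 (sq_nonneg c)
  calc ∑ j, ∑ k, M j k ^ 2 = ∑ r, μ r ^ 2 := hfro
    _ ≤ ∑ r, c ^ 2 * ∑ i, (B.mulVec (b r) i) ^ 2 :=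
        Finset.sum_le_sum fun r _ => hstep r
    _ = c ^ 2 * ∑ r, ∑ i, (B.mulVec (b r) i) ^ 2 := by rw [Finset.mul_sum]
    _ = c ^ 2 * ∑ j, ∑ k, B j k ^ 2 := by rw [hBfro]

end TensorAux

open TensorAux in
/-- If the symmetric 3-tensor `T` satisfies condition (Γ), then
`‖T‖_Fr² ≤ τ² tr(Γ²) tr(Γ⁴)`, where `‖T‖_Fr² = ∑ i j k, (T i j k)²`. -/
theorem tensor_frobenius_bound
    (p : ℕ) (T : Fin p → Fin p → Fin p → ℝ)
    (hsym : ∀ i j k, T i j k = T j i k ∧ T i j k = T i k j)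
    (Γ : Matrix (Fin p) (Fin p) ℝ) (hΓ : Γ.IsSymm) (τ : ℝ) (hτ : 0 < τ)
    (hT : ∀ u : Fin p → ℝ,
      |∑ i, ∑ j, ∑ k, T i j k * u i * u j * u k| ≤ τ * euclNorm (Γ.mulVec u) ^ 3) :
    ∑ i, ∑ j, ∑ k, (T i j k) ^ 2 ≤ τ ^ 2 * (Γ ^ 2).trace * (Γ ^ 4).trace := by
  classical
  have hTtri : ∀ u, |tri T u u u| ≤ τ * euclNorm (Γ.mulVec u) ^ 3 := hT
  set ni : Fin p → ℝ := fun i => euclNorm (Γ.mulVec (Pi.single i (1:ℝ))) with hni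
  -- the quadratic form bound for each slice
  have hquad : ∀ (i : Fin p) (v : Fin p → ℝ),
      |v ⬝ᵥ (Matrix.of fun j k => T i j k).mulVec v|
        ≤ (τ * ni i) * (v ⬝ᵥ (Γ ^ 2).mulVec v) := by
    intro i v
    have e1 : v ⬝ᵥ (Matrix.of fun j k => T i j k).mulVec v
        = tri T (Pi.single i (1:ℝ)) v v := by
      have e1a : tri T (Pi.single i (1:ℝ)) v v
          = ∑ j, ∑ k, T i j k * v j * v k := by
        unfold tri
        rw [Finset.sum_eq_single_of_mem i (Finset.mem_univ i)]
        · refine Finset.sum_congr rfl fun j _ => Finset.sum_congr rfl fun k _ => ?_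
          rw [Pi.single_eq_same]
          ring
        · intro a _ hai
          refine Finset.sum_eq_zero fun j _ => Finset.sum_eq_zero fun k _ => ?_
          rw [Pi.single_eq_of_ne hai]
          ring
      rw [e1a]
      calc v ⬝ᵥ (Matrix.of fun j k => T i j k).mulVec v
          = ∑ j, v j * ∑ k, T i j k * v k := rfl
        _ = ∑ j, ∑ k, T i j k * v j * v k := by
            refine Finset.sum_congr rfl fun j _ => ?_
            rw [Finset.mul_sum]
            exact Finset.sum_congr rfl fun k _ => by ring
    have e2 : v ⬝ᵥ (Γ ^ 2).mulVec v = euclNorm (Γ.mulVec v) ^ 2 := by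
      have h22 : (Γ ^ 2).mulVec v = Γ.mulVec (Γ.mulVec v) := by
        rw [Matrix.mulVec_mulVec, ← pow_two]
      rw [h22, Matrix.dotProduct_mulVec]
      have hvm : v ᵥ* Γ = Γ.mulVec v := by
        rw [← Matrix.vecMul_transpose]
        rw [hΓ.eq]
      rw [hvm, euclNorm_sq]
      exact Finset.sum_congr rfl fun j _ => (sq _).symm
    rw [e1, e2]
    have := polar hsym hτ hTtri (Pi.single i (1:ℝ)) v
    calc |tri T (Pi.single i (1:ℝ)) v v|
        ≤ τ * euclNorm (Γ.mulVec (Pi.single i (1:ℝ))) * euclNorm (Γ.mulVec v) ^ 2 :=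
          this
      _ = (τ * ni i) * euclNorm (Γ.mulVec v) ^ 2 := by rw [hni]
  -- apply the matrix bound slice by slice
  have hslice : ∀ i : Fin p, ∑ j, ∑ k, T i j k ^ 2
      ≤ (τ * ni i) ^ 2 * ∑ j, ∑ k, ((Γ ^ 2) j k) ^ 2 := by
    intro i
    have hMs : (Matrix.of fun j k => T i j k).IsSymm := by
      rw [Matrix.IsSymm]
      ext j k
      rw [Matrix.transpose_apply]
      exact ((hsym i j k).2).symm.trans rfl
    exact matrix_bound (Matrix.of fun j k => T i j k) (Γ ^ 2) hMs (τ * ni i) (hquad i)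
  -- trace identities
  have htr2 : (Γ ^ 2).trace = ∑ i, ni i ^ 2 := by
    have h1 : (Γ ^ 2).trace = ∑ i, ∑ j, Γ i j * Γ j i := by
      rw [pow_two]
      rfl
    rw [h1]
    refine Finset.sum_congr rfl fun i _ => ?_
    have h2 : ni i ^ 2 = ∑ j, (Γ j i * 1) ^ 2 := by
      rw [hni]
      simp only [Matrix.mulVec_single]
      rw [euclNorm_sq]
      simp
    rw [h2]
    refine Finset.sum_congr rfl fun j _ => ?_
    rw [hΓ.apply i j]
    ring
  have htr4 : (Γ ^ 4).trace = ∑ j, ∑ k, ((Γ ^ 2) j k) ^ 2 := by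
    have h1 : Γ ^ 4 = (Γ ^ 2) * (Γ ^ 2) := by rw [← pow_add]
    have h2 : (Γ ^ 4).trace = ∑ j, ∑ k, (Γ ^ 2) j k * (Γ ^ 2) k j := by
      rw [h1]
      rfl
    rw [h2]
    refine Finset.sum_congr rfl fun j _ => Finset.sum_congr rfl fun k _ => ?_
    rw [(hΓ.pow 2).apply j k]
    ring
  calc ∑ i, ∑ j, ∑ k, T i j k ^ 2
      ≤ ∑ i, (τ * ni i) ^ 2 * ∑ j, ∑ k, ((Γ ^ 2) j k) ^ 2 :=
        Finset.sum_le_sum fun i _ => hslice i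
    _ = (∑ i, (τ * ni i) ^ 2) * ∑ j, ∑ k, ((Γ ^ 2) j k) ^ 2 := by
        rw [Finset.sum_mul]
    _ = τ ^ 2 * (∑ i, ni i ^ 2) * ∑ j, ∑ k, ((Γ ^ 2) j k) ^ 2 := by
        congr 1
        rw [Finset.mul_sum]
        exact Finset.sum_congr rfl fun i _ => by ring
    _ = τ ^ 2 * (Γ ^ 2).trace * (Γ ^ 4).trace := by rw [htr2, htr4]
end

section
/- Suppose the symmetric 3-tensor T satisfies condition (Γ). Then the vector M ∈ ℝ^p with M_i = tr(T_i) satisfies ‖M‖ ≤ τ ‖Γ‖ tr(Γ²), where ‖Γ‖ is the spectral norm of Γ. -/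
open Matrix Finset

/-- Spectral (ℓ²-operator) norm of a real `p×p` matrix. -/
noncomputable def specNorm {p : ℕ} (A : Matrix (Fin p) (Fin p) ℝ) : ℝ :=
  ‖Matrix.toEuclideanCLM (𝕜 := ℝ) A‖

set_option maxHeartbeats 1000000

private lemma nonpos_of_mul_le {C K : ℝ} (h : ∀ t : ℝ, 1 ≤ t → C * t ≤ K) : C ≤ 0 := by
  by_contra hC
  push_neg at hC
  have h2 := h _ (le_max_left 1 ((K + 1) / C))
  have h3 : C * ((K + 1) / C) ≤ C * max 1 ((K + 1) / C) :=
    mul_le_mul_of_nonneg_left (le_max_right _ _) hC.le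
  rw [mul_div_cancel₀ _ (ne_of_gt hC)] at h3
  linarith

private lemma eq_zero_of_abs_mul_le {C K : ℝ} (h : ∀ t : ℝ, 1 ≤ t → |C| * t ≤ K) : C = 0 :=
  abs_eq_zero.mp (le_antisymm (nonpos_of_mul_le h) (abs_nonneg _))

private lemma cubic_coeffs_zero {c0 c1 c2 c3 K : ℝ}
    (h : ∀ t : ℝ, |c3 * t ^ 3 + c2 * t ^ 2 + c1 * t + c0| ≤ K) :
    c1 = 0 ∧ c2 = 0 := by
  constructor
  · refine eq_zero_of_abs_mul_le (K := 3 * K) fun t ht => ?_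
    have ht0 : (0:ℝ) ≤ t := le_trans zero_le_one ht
    have hA := abs_le.1 (h t)
    have hB := abs_le.1 (h (-t))
    have hC := abs_le.1 (h (2 * t))
    have hD := abs_le.1 (h (-(2 * t)))
    have key : 12 * (c1 * t) =
        8 * (c3 * t ^ 3 + c2 * t ^ 2 + c1 * t + c0)
        - 8 * (c3 * (-t) ^ 3 + c2 * (-t) ^ 2 + c1 * (-t) + c0)
        - (c3 * (2 * t) ^ 3 + c2 * (2 * t) ^ 2 + c1 * (2 * t) + c0)
        + (c3 * (-(2 * t)) ^ 3 + c2 * (-(2 * t)) ^ 2 + c1 * (-(2 * t)) + c0) := by ring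
    have h12 : |c1 * t| ≤ 3 * K / 2 := by
      rw [abs_le]; constructor <;> nlinarith
    calc |c1| * t = |c1 * t| := by rw [abs_mul, abs_of_nonneg ht0]
      _ ≤ 3 * K / 2 := h12
      _ ≤ 3 * K := by nlinarith [(abs_nonneg (c3 * 0 ^ 3 + c2 * 0 ^ 2 + c1 * 0 + c0)).trans (h 0)]
  · refine eq_zero_of_abs_mul_le (K := 2 * K) fun t ht => ?_
    have ht0 : (0:ℝ) ≤ t := le_trans zero_le_one ht
    have hA := abs_le.1 (h t)
    have hB := abs_le.1 (h (-t))
    have hE := abs_le.1 (h 0)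
    have key : 2 * (c2 * t ^ 2) =
        (c3 * t ^ 3 + c2 * t ^ 2 + c1 * t + c0)
        + (c3 * (-t) ^ 3 + c2 * (-t) ^ 2 + c1 * (-t) + c0)
        - 2 * (c3 * 0 ^ 3 + c2 * 0 ^ 2 + c1 * 0 + c0) := by ring
    have h2 : |c2 * t ^ 2| ≤ 2 * K := by
      rw [abs_le]; constructor <;> nlinarith
    have h3 : |c2| * t ^ 2 ≤ 2 * K := by rw [← abs_of_nonneg (sq_nonneg t), ← abs_mul]; exact h2
    nlinarith [abs_nonneg c2]

private lemma coeff_bound {A0 A1 A2 A3 a b c τ : ℝ} (ha : 0 ≤ a) (hc : 0 ≤ c)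
    (hb : b ^ 2 ≤ a ^ 2 * c ^ 2) (hτ : 0 < τ)
    (hbound : ∀ α β : ℝ,
      |A0 * α ^ 3 + 3 * A1 * (α ^ 2 * β) + 3 * A2 * (α * β ^ 2) + A3 * β ^ 3|
        ≤ τ * Real.sqrt (a ^ 2 * α ^ 2 + 2 * b * (α * β) + c ^ 2 * β ^ 2) ^ 3) :
    |A1| ≤ τ * (a ^ 2 * c) := by
  rcases eq_or_lt_of_le ha with ha0 | ha0
  · have hb0 : b = 0 := by
      have hb' : b ^ 2 ≤ 0 := by rw [← ha0] at hb; simpa using hb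
      have hbsq : b ^ 2 = 0 := le_antisymm hb' (sq_nonneg b)
      exact pow_eq_zero_iff (by norm_num) |>.mp hbsq
    have h : ∀ t : ℝ, |A0 * t ^ 3 + (3 * A1) * t ^ 2 + (3 * A2) * t + A3| ≤ τ * c ^ 3 := by
      intro t
      have h0 := hbound t 1
      have e1 : a ^ 2 * t ^ 2 + 2 * b * (t * 1) + c ^ 2 * 1 ^ 2 = c ^ 2 := by
        rw [← ha0, hb0]; ring
      rw [e1, Real.sqrt_sq hc] at h0
      calc |A0 * t ^ 3 + (3 * A1) * t ^ 2 + (3 * A2) * t + A3|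
          = |A0 * t ^ 3 + 3 * A1 * (t ^ 2 * 1) + 3 * A2 * (t * 1 ^ 2) + A3 * 1 ^ 3| := by
            ring_nf
        _ ≤ τ * c ^ 3 := h0
    have hA1 : 3 * A1 = 0 := (cubic_coeffs_zero h).2
    have hz : A1 = 0 := by linarith
    rw [hz, abs_zero, ← ha0]
    positivity
  rcases eq_or_lt_of_le hc with hc0 | hc0
  · have hb0 : b = 0 := by
      have hb' : b ^ 2 ≤ 0 := by rw [← hc0] at hb; simpa using hb
      have hbsq : b ^ 2 = 0 := le_antisymm hb' (sq_nonneg b)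
      exact pow_eq_zero_iff (by norm_num) |>.mp hbsq
    have h : ∀ t : ℝ, |A3 * t ^ 3 + (3 * A2) * t ^ 2 + (3 * A1) * t + A0| ≤ τ * a ^ 3 := by
      intro t
      have h0 := hbound 1 t
      have e1 : a ^ 2 * 1 ^ 2 + 2 * b * (1 * t) + c ^ 2 * t ^ 2 = a ^ 2 := by
        rw [← hc0, hb0]; ring
      rw [e1, Real.sqrt_sq ha] at h0
      calc |A3 * t ^ 3 + (3 * A2) * t ^ 2 + (3 * A1) * t + A0|
          = |A0 * 1 ^ 3 + 3 * A1 * (1 ^ 2 * t) + 3 * A2 * (1 * t ^ 2) + A3 * t ^ 3| := by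
            ring_nf
        _ ≤ τ * a ^ 3 := h0
    have hA1 : 3 * A1 = 0 := (cubic_coeffs_zero h).1
    have hz : A1 = 0 := by linarith
    rw [hz, abs_zero, ← hc0]
    positivity
  have hA3 : |A3| ≤ τ * c ^ 3 := by
    have h0 := hbound 0 1
    have e1 : a ^ 2 * 0 ^ 2 + 2 * b * (0 * 1) + c ^ 2 * 1 ^ 2 = c ^ 2 := by ring
    rw [e1, Real.sqrt_sq hc] at h0
    calc |A3| = |A0 * 0 ^ 3 + 3 * A1 * (0 ^ 2 * 1) + 3 * A2 * (0 * 1 ^ 2) + A3 * 1 ^ 3| := by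
          ring_nf
      _ ≤ τ * c ^ 3 := h0
  have main_degen : ∀ σ : ℝ, σ ^ 2 = 1 → b = σ * (a * c) → |A1| ≤ τ * (a ^ 2 * c) := by
    intro σ hσ2 hσ
    have h : ∀ t : ℝ,
        |(A0 * c ^ 3 - 3 * σ * A1 * a * c ^ 2 + 3 * A2 * a ^ 2 * c - σ * A3 * a ^ 3) * t ^ 3
          + (3 * (A1 * c ^ 2 - 2 * σ * A2 * a * c + A3 * a ^ 2)) * t ^ 2
          + (3 * (A2 * c - σ * A3 * a)) * t + A3| ≤ τ * c ^ 3 := by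
      intro t
      have h0 := hbound (c * t) (-(σ * (a * t)) + 1)
      have e1 : a ^ 2 * (c * t) ^ 2 + 2 * b * (c * t * (-(σ * (a * t)) + 1))
          + c ^ 2 * (-(σ * (a * t)) + 1) ^ 2 = c ^ 2 := by
        rw [hσ]; linear_combination (-(a ^ 2 * c ^ 2 * t ^ 2)) * hσ2
      rw [e1, Real.sqrt_sq hc] at h0
      have e2 : (A0 * c ^ 3 - 3 * σ * A1 * a * c ^ 2 + 3 * A2 * a ^ 2 * c - σ * A3 * a ^ 3) * t ^ 3
          + (3 * (A1 * c ^ 2 - 2 * σ * A2 * a * c + A3 * a ^ 2)) * t ^ 2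
          + (3 * (A2 * c - σ * A3 * a)) * t + A3
          = A0 * (c * t) ^ 3 + 3 * A1 * ((c * t) ^ 2 * (-(σ * (a * t)) + 1))
            + 3 * A2 * ((c * t) * (-(σ * (a * t)) + 1) ^ 2) + A3 * (-(σ * (a * t)) + 1) ^ 3 := by
        linear_combination (-((3 * A2 * a ^ 2 * c - σ * A3 * a ^ 3) * t ^ 3
          + 3 * A3 * a ^ 2 * t ^ 2)) * hσ2
      rw [e2]
      exact h0
    obtain ⟨hC1, hC2⟩ := cubic_coeffs_zero h
    have key : A1 * c ^ 2 = A3 * a ^ 2 := by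
      linear_combination (1 / 3) * hC2 + (2 * σ * a / 3) * hC1 + (2 * A3 * a ^ 2) * hσ2
    have habs : |A1| * c ^ 2 = |A3| * a ^ 2 := by
      have h1 : |A1 * c ^ 2| = |A3 * a ^ 2| := by rw [key]
      rw [abs_mul, abs_mul, abs_of_nonneg (sq_nonneg c), abs_of_nonneg (sq_nonneg a)] at h1
      exact h1
    have hfin : |A1| * c ^ 2 ≤ (τ * (a ^ 2 * c)) * c ^ 2 := by nlinarith [sq_nonneg a]
    exact le_of_mul_le_mul_right hfin (pow_pos hc0 2)
  have habsle : |b| ≤ a * c := by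
    nlinarith [sq_abs b, abs_nonneg b, mul_pos ha0 hc0]
  rcases eq_or_lt_of_le habsle with heq | hlt
  · rcases (abs_eq (mul_pos ha0 hc0).le).mp heq with h1 | h1
    · exact main_degen 1 (by norm_num) (by linarith)
    · exact main_degen (-1) (by norm_num) (by linarith)
  -- main case: |b| < a*c
  have hac : 0 < a * c := mul_pos ha0 hc0
  obtain ⟨hbl, hbr⟩ := abs_lt.mp hlt
  have hbh1 : -1 < b / (a * c) := by rw [lt_div_iff₀ hac]; linarith
  have hbh2 : b / (a * c) < 1 := by rw [div_lt_iff₀ hac]; linarith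
  set x : ℝ := Real.cos (Real.arccos (b / (a * c)) / 3) with hxdef
  set y : ℝ := Real.sin (Real.arccos (b / (a * c)) / 3) with hydef
  set s : ℝ := Real.sqrt 3 with hsdef
  have hs : s ^ 2 = 3 := Real.sq_sqrt (by norm_num)
  have hxy : x ^ 2 + y ^ 2 = 1 := by
    have := Real.sin_sq_add_cos_sq (Real.arccos (b / (a * c)) / 3); linarith
  have hx3 : 4 * x ^ 3 - 3 * x = b / (a * c) := by
    have h1 := Real.cos_three_mul (Real.arccos (b / (a * c)) / 3)
    rw [show 3 * (Real.arccos (b / (a * c)) / 3) = Real.arccos (b / (a * c)) by ring,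
      Real.cos_arccos hbh1.le hbh2.le] at h1
    linarith
  have hy3 : 3 * y - 4 * y ^ 3 = Real.sqrt (1 - (b / (a * c)) ^ 2) := by
    have h1 := Real.sin_three_mul (Real.arccos (b / (a * c)) / 3)
    rw [show 3 * (Real.arccos (b / (a * c)) / 3) = Real.arccos (b / (a * c)) by ring,
      Real.sin_arccos] at h1
    linarith
  have hw : 0 < (3*y - 4*y^3) := by
    rw [hy3]
    apply Real.sqrt_pos.mpr
    nlinarith
  have hbb : b = (4 * x ^ 3 - 3 * x) * (a * c) := by
    rw [hx3]; field_simp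
  have I1 : 2*((y^2 - 3*x^2)^2/6)*(2*x*y)^3 - 2*(2/3*(y^2*(y - s*x)^2))*(x*y - s*(2*x^2-1)/2)^3 + 2*(2/3*(y^2*(y + s*x)^2))*(-(x*y) - s*(2*x^2-1)/2)^3 = 0 := by
    linear_combination (2*x*y^3 + (2/3)*x*y^3*s^2 + -2*x*y^5 + -18*x^3*y^3 + -6*x^3*y^3*s^2 + 16*x^3*y^5 + 48*x^5*y^3 + 16*x^5*y^3*s^2 + (-80/3)*x^5*y^5 + -40*x^7*y^3 + (-40/3)*x^7*y^3*s^2) * hs + (-6*x*y^3 + 48*x^3*y^3 + -96*x^5*y^3) * hxy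
  have I2 : 2*((y^2 - 3*x^2)^2/6)*(2*x*y)^2*y - 2*(2/3*(y^2*(y - s*x)^2))*(x*y - s*(2*x^2-1)/2)^2*((y + s*x)/2) + 2*(2/3*(y^2*(y + s*x)^2))*(-(x*y) - s*(2*x^2-1)/2)^2*((s*x - y)/2) = (3*y - 4*y^3)^3 := by
    linear_combination ((-1/3)*y^5 + 1*x^2*y^3 + (1/3)*x^2*y^3*s^2 + (8/3)*x^2*y^5 + -8*x^4*y^3 + (-8/3)*x^4*y^3*s^2 + (-8/3)*x^4*y^5 + 12*x^6*y^3 + 4*x^6*y^3*s^2) * hs + (27*y^3 + -80*y^5 + 64*y^7 + 24*x^2*y^3 + -64*x^2*y^5 + 48*x^4*y^3) * hxy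
  have I3 : 2*((y^2 - 3*x^2)^2/6)*(2*x*y)*y^2 - 2*(2/3*(y^2*(y - s*x)^2))*(x*y - s*(2*x^2-1)/2)*((y + s*x)/2)^2 + 2*(2/3*(y^2*(y + s*x)^2))*(-(x*y) - s*(2*x^2-1)/2)*((s*x - y)/2)^2 = 0 := by
    linear_combination ((4/3)*x^3*y^5 + -2*x^5*y^3 + (-2/3)*x^5*y^3*s^2) * hs + (0:ℝ) * hxy
  have I4 : 2*((y^2 - 3*x^2)^2/6)*y^3 - 2*(2/3*(y^2*(y - s*x)^2))*((y + s*x)/2)^3 + 2*(2/3*(y^2*(y + s*x)^2))*((s*x - y)/2)^3 = 0 := by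
    linear_combination ((2/3)*x^2*y^5 + -1*x^4*y^3 + (-1/3)*x^4*y^3*s^2) * hs + (0:ℝ) * hxy
  have I5 : ((y^2 - 3*x^2)^2/6) + (2/3*(y^2*(y - s*x)^2)) + (2/3*(y^2*(y + s*x)^2)) = 3/2 := by
    linear_combination ((4/3)*x^2*y^2) * hs + ((3/2) + (3/2)*y^2 + (3/2)*x^2) * hxy
  have I6_0 : (2*x*y)^2 + 2*(4 * x ^ 3 - 3 * x)*((2*x*y)*y) + y^2 = (3*y - 4*y^3)^2 := by
    linear_combination (0:ℝ) * hs + (8*y^2 + -16*y^4 + 16*x^2*y^2) * hxy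
  have I6_1 : (x*y - s*(2*x^2-1)/2)^2 + 2*(4 * x ^ 3 - 3 * x)*((x*y - s*(2*x^2-1)/2)*((y + s*x)/2)) + ((y + s*x)/2)^2 = (3*y - 4*y^3)^2 := by
    linear_combination ((1/4) + (-9/4)*x^2 + 6*x^4 + -4*x^6) * hs + ((-3/4) + 8*y^2 + -16*y^4 + 6*x^2 + 16*x^2*y^2 + -12*x^4) * hxy
  have I6_2 : (-(x*y) - s*(2*x^2-1)/2)^2 + 2*(4 * x ^ 3 - 3 * x)*((-(x*y) - s*(2*x^2-1)/2)*((s*x - y)/2)) + ((s*x - y)/2)^2 = (3*y - 4*y^3)^2 := by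
    linear_combination ((1/4) + (-9/4)*x^2 + 6*x^4 + -4*x^6) * hs + ((-3/4) + 8*y^2 + -16*y^4 + 6*x^2 + 16*x^2*y^2 + -12*x^4) * hxy
  have hF0 : |A0 * ((2*x*y)/a) ^ 3 + 3 * A1 * (((2*x*y)/a) ^ 2 * (y/c)) + 3 * A2 * (((2*x*y)/a) * (y/c) ^ 2) + A3 * (y/c) ^ 3| ≤ τ * (3*y - 4*y^3) ^ 3 := by
    have h0 := hbound ((2*x*y)/a) (y/c)
    have e1 : a ^ 2 * ((2*x*y)/a) ^ 2 + 2 * b * (((2*x*y)/a) * (y/c)) + c ^ 2 * (y/c) ^ 2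
        = (3*y - 4*y^3)^2 := by
      refine Eq.trans ?_ I6_0
      rw [hbb]; field_simp
    rw [e1, Real.sqrt_sq hw.le] at h0
    exact h0
  have hF1 : |A0 * ((x*y - s*(2*x^2-1)/2)/a) ^ 3 + 3 * A1 * (((x*y - s*(2*x^2-1)/2)/a) ^ 2 * (((y + s*x)/2)/c)) + 3 * A2 * (((x*y - s*(2*x^2-1)/2)/a) * (((y + s*x)/2)/c) ^ 2) + A3 * (((y + s*x)/2)/c) ^ 3| ≤ τ * (3*y - 4*y^3) ^ 3 := by
    have h0 := hbound ((x*y - s*(2*x^2-1)/2)/a) (((y + s*x)/2)/c)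
    have e1 : a ^ 2 * ((x*y - s*(2*x^2-1)/2)/a) ^ 2 + 2 * b * (((x*y - s*(2*x^2-1)/2)/a) * (((y + s*x)/2)/c)) + c ^ 2 * (((y + s*x)/2)/c) ^ 2
        = (3*y - 4*y^3)^2 := by
      refine Eq.trans ?_ I6_1
      rw [hbb]; field_simp
    rw [e1, Real.sqrt_sq hw.le] at h0
    exact h0
  have hF2 : |A0 * ((-(x*y) - s*(2*x^2-1)/2)/a) ^ 3 + 3 * A1 * (((-(x*y) - s*(2*x^2-1)/2)/a) ^ 2 * (((s*x - y)/2)/c)) + 3 * A2 * (((-(x*y) - s*(2*x^2-1)/2)/a) * (((s*x - y)/2)/c) ^ 2) + A3 * (((s*x - y)/2)/c) ^ 3| ≤ τ * (3*y - 4*y^3) ^ 3 := by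
    have h0 := hbound ((-(x*y) - s*(2*x^2-1)/2)/a) (((s*x - y)/2)/c)
    have e1 : a ^ 2 * ((-(x*y) - s*(2*x^2-1)/2)/a) ^ 2 + 2 * b * (((-(x*y) - s*(2*x^2-1)/2)/a) * (((s*x - y)/2)/c)) + c ^ 2 * (((s*x - y)/2)/c) ^ 2
        = (3*y - 4*y^3)^2 := by
      refine Eq.trans ?_ I6_2
      rw [hbb]; field_simp
    rw [e1, Real.sqrt_sq hw.le] at h0
    exact h0
  have combine : 2*((y^2 - 3*x^2)^2/6)*(A0 * ((2*x*y)/a) ^ 3 + 3 * A1 * (((2*x*y)/a) ^ 2 * (y/c)) + 3 * A2 * (((2*x*y)/a) * (y/c) ^ 2) + A3 * (y/c) ^ 3) - 2*(2/3*(y^2*(y - s*x)^2))*(A0 * ((x*y - s*(2*x^2-1)/2)/a) ^ 3 + 3 * A1 * (((x*y - s*(2*x^2-1)/2)/a) ^ 2 * (((y + s*x)/2)/c)) + 3 * A2 * (((x*y - s*(2*x^2-1)/2)/a) * (((y + s*x)/2)/c) ^ 2) + A3 * (((y + s*x)/2)/c) ^ 3) + 2*(2/3*(y^2*(y + s*x)^2))*(A0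 * ((-(x*y) - s*(2*x^2-1)/2)/a) ^ 3 + 3 * A1 * (((-(x*y) - s*(2*x^2-1)/2)/a) ^ 2 * (((s*x - y)/2)/c)) + 3 * A2 * (((-(x*y) - s*(2*x^2-1)/2)/a) * (((s*x - y)/2)/c) ^ 2) + A3 * (((s*x - y)/2)/c) ^ 3) = 3 * A1 * (3*y - 4*y^3) ^ 3 / (a ^ 2 * c) := by
    linear_combination (A0/a^3) * I1 + (3*A1/(a^2*c)) * I2 + (3*A2/(a*c^2)) * I3 + (A3/c^3) * I4
  have hE0 : (0:ℝ) ≤ ((y^2 - 3*x^2)^2/6) := by positivity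
  have hE1 : (0:ℝ) ≤ (2/3*(y^2*(y - s*x)^2)) := by positivity
  have hE2 : (0:ℝ) ≤ (2/3*(y^2*(y + s*x)^2)) := by positivity
  have hI5' : ((y^2 - 3*x^2)^2/6)*(τ*(3*y - 4*y^3)^3) + (2/3*(y^2*(y - s*x)^2))*(τ*(3*y - 4*y^3)^3) + (2/3*(y^2*(y + s*x)^2))*(τ*(3*y - 4*y^3)^3) = 3/2*(τ*(3*y - 4*y^3)^3) := by
    linear_combination (τ*(3*y - 4*y^3)^3) * I5
  have p0 := abs_le.1 hF0
  have m0a := mul_le_mul_of_nonneg_left p0.2 hE0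
  have m0b := mul_le_mul_of_nonneg_left p0.1 hE0
  have p1 := abs_le.1 hF1
  have m1a := mul_le_mul_of_nonneg_left p1.2 hE1
  have m1b := mul_le_mul_of_nonneg_left p1.1 hE1
  have p2 := abs_le.1 hF2
  have m2a := mul_le_mul_of_nonneg_left p2.2 hE2
  have m2b := mul_le_mul_of_nonneg_left p2.1 hE2
  have habs : |3 * A1 * (3*y - 4*y^3) ^ 3 / (a ^ 2 * c)| ≤ 3 * (τ * (3*y - 4*y^3) ^ 3) := by
    rw [← combine, abs_le]
    constructor <;> linarith [m0a, m0b, m1a, m1b, m2a, m2b, hI5']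
  have heq2 : |3 * A1 * (3*y - 4*y^3) ^ 3 / (a ^ 2 * c)| = |A1| * (3 * (3*y - 4*y^3) ^ 3 / (a ^ 2 * c)) := by
    rw [abs_div, abs_of_pos (show (0:ℝ) < a ^ 2 * c by positivity), abs_mul, abs_mul,
      abs_of_pos (show (0:ℝ) < 3 by norm_num), abs_of_pos (pow_pos hw 3)]
    ring
  have hq : 0 < 3 * (3*y - 4*y^3) ^ 3 / (a ^ 2 * c) := by positivity
  have hrw : 3 * (τ * (3*y - 4*y^3) ^ 3) = (τ * (a ^ 2 * c)) * (3 * (3*y - 4*y^3) ^ 3 / (a ^ 2 * c)) := by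
    field_simp
  rw [heq2, hrw] at habs
  exact le_of_mul_le_mul_right habs hq

private def B3 {p : ℕ} (T : Fin p → Fin p → Fin p → ℝ) (u v w : Fin p → ℝ) : ℝ :=
  ∑ i, ∑ j, ∑ k, T i j k * u i * v j * w k

private lemma B3_swap12 {p : ℕ} {T : Fin p → Fin p → Fin p → ℝ}
    (h12 : ∀ i j k, T i j k = T j i k) (u v w : Fin p → ℝ) :
    B3 T u v w = B3 T v u w := by
  unfold B3
  rw [Finset.sum_comm]
  refine Finset.sum_congr rfl fun a _ => Finset.sum_congr rfl fun b _ =>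
    Finset.sum_congr rfl fun k _ => ?_
  rw [h12 b a k]; ring

private lemma B3_swap23 {p : ℕ} {T : Fin p → Fin p → Fin p → ℝ}
    (h23 : ∀ i j k, T i j k = T i k j) (u v w : Fin p → ℝ) :
    B3 T u v w = B3 T u w v := by
  unfold B3
  refine Finset.sum_congr rfl fun a _ => ?_
  rw [Finset.sum_comm]
  refine Finset.sum_congr rfl fun b _ => Finset.sum_congr rfl fun c _ => ?_
  rw [h23 a c b]; ring

private lemma B3_expand {p : ℕ} (T : Fin p → Fin p → Fin p → ℝ) (u v : Fin p → ℝ) (α β : ℝ) :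
    (∑ i, ∑ j, ∑ k, T i j k * (α * u i + β * v i) * (α * u j + β * v j) * (α * u k + β * v k))
      = α ^ 3 * B3 T u u u + α ^ 2 * β * (B3 T u u v + B3 T u v u + B3 T v u u)
        + α * β ^ 2 * (B3 T u v v + B3 T v u v + B3 T v v u) + β ^ 3 * B3 T v v v := by
  unfold B3
  simp only [mul_add, add_mul, Finset.mul_sum, ← Finset.sum_add_distrib]
  refine Finset.sum_congr rfl fun i _ => Finset.sum_congr rfl fun j _ =>
    Finset.sum_congr rfl fun k _ => ?_
  ring

private lemma mulVec_euclNorm_le {p : ℕ} (A : Matrix (Fin p) (Fin p) ℝ) (w : Fin p → ℝ) :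
    euclNorm (A.mulVec w) ≤ specNorm A * euclNorm w := by
  have hn : ∀ z : Fin p → ℝ, euclNorm z = ‖(WithLp.equiv 2 (Fin p → ℝ)).symm z‖ := by
    intro z
    rw [EuclideanSpace.norm_eq]
    unfold euclNorm
    congr 1
    refine Finset.sum_congr rfl fun i _ => ?_
    rw [WithLp.equiv_symm_apply, PiLp.toLp_apply, Real.norm_eq_abs, sq_abs]
  rw [hn, hn, WithLp.equiv_symm_apply, ← Matrix.toEuclideanCLM_toLp]
  exact ContinuousLinearMap.le_opNorm _ _

/-- If the symmetric 3-tensor `T` satisfies condition (Γ), then the vector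
`M` with `M i = tr(T_i) = ∑ j, T i j j` satisfies `‖M‖ ≤ τ ‖Γ‖ tr(Γ²)`,
with `‖Γ‖` the spectral norm. -/
theorem tensor_trace_vector_bound
    (p : ℕ) (T : Fin p → Fin p → Fin p → ℝ)
    (hsym : ∀ i j k, T i j k = T j i k ∧ T i j k = T i k j)
    (Γ : Matrix (Fin p) (Fin p) ℝ) (hΓ : Γ.IsSymm) (τ : ℝ) (hτ : 0 < τ)
    (hT : ∀ u : Fin p → ℝ,
      |∑ i, ∑ j, ∑ k, T i j k * u i * u j * u k| ≤ τ * euclNorm (Γ.mulVec u) ^ 3) :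
    euclNorm (fun i => ∑ j, T i j j) ≤ τ * specNorm Γ * (Γ ^ 2).trace := by
  classical
  have h12 : ∀ i j k, T i j k = T j i k := fun i j k => (hsym i j k).1
  have h23 : ∀ i j k, T i j k = T i k j := fun i j k => (hsym i j k).2
  set Mv : Fin p → ℝ := fun i => ∑ j, T i j j with hMvdef
  set e : Fin p → Fin p → ℝ := fun j i => if i = j then 1 else 0 with hedef
  have hsq : ∀ z : Fin p → ℝ, euclNorm z ^ 2 = ∑ i, z i ^ 2 := fun z =>
    Real.sq_sqrt (by positivity)
  have hnn : ∀ z : Fin p → ℝ, 0 ≤ euclNorm z := fun _ => Real.sqrt_nonneg _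
  have hmve : ∀ j, Γ.mulVec (e j) = fun i => Γ i j := by
    intro j; funext i
    simp [hedef, Matrix.mulVec, dotProduct]
  have hlin : ∀ (u v : Fin p → ℝ) (α β : ℝ),
      Γ.mulVec (fun i => α * u i + β * v i) = fun i => α * Γ.mulVec u i + β * Γ.mulVec v i := by
    intro u v α β; funext i
    simp only [Matrix.mulVec, dotProduct]
    rw [Finset.mul_sum, Finset.mul_sum, ← Finset.sum_add_distrib]
    exact Finset.sum_congr rfl fun k _ => by ring
  have hper : ∀ j : Fin p,
      |B3 T (e j) (e j) Mv| ≤ τ * (euclNorm (Γ.mulVec (e j)) ^ 2 * euclNorm (Γ.mulVec Mv)) := by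
    intro j
    refine coeff_bound (A0 := B3 T (e j) (e j) (e j)) (A2 := B3 T (e j) Mv Mv)
      (A3 := B3 T Mv Mv Mv) (b := ∑ i, Γ.mulVec (e j) i * Γ.mulVec Mv i)
      (hnn _) (hnn _) ?_ hτ ?_
    · rw [hsq, hsq]
      exact Finset.sum_mul_sq_le_sq_mul_sq _ _ _
    · intro α β
      have h0 : |∑ i, ∑ jj, ∑ k, T i jj k * (α * e j i + β * Mv i) * (α * e j jj + β * Mv jj)
            * (α * e j k + β * Mv k)|
          ≤ τ * euclNorm (Γ.mulVec (fun i => α * e j i + β * Mv i)) ^ 3 :=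
        hT (fun i => α * e j i + β * Mv i)
      have hL : (∑ i, ∑ jj, ∑ k, T i jj k * (α * e j i + β * Mv i) * (α * e j jj + β * Mv jj)
            * (α * e j k + β * Mv k))
          = B3 T (e j) (e j) (e j) * α ^ 3 + 3 * B3 T (e j) (e j) Mv * (α ^ 2 * β)
            + 3 * B3 T (e j) Mv Mv * (α * β ^ 2) + B3 T Mv Mv Mv * β ^ 3 := by
        rw [B3_expand T (e j) Mv α β,
          B3_swap23 h23 (e j) Mv (e j), B3_swap12 h12 Mv (e j) (e j),
          B3_swap23 h23 (e j) Mv (e j),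
          B3_swap12 h12 Mv (e j) Mv, B3_swap23 h23 Mv Mv (e j),
          B3_swap12 h12 Mv (e j) Mv]
        ring
      have expand : ∀ i ∈ Finset.univ, (α * Γ.mulVec (e j) i + β * Γ.mulVec Mv i) ^ 2
          = α ^ 2 * (Γ.mulVec (e j) i) ^ 2 + 2 * (α * β) * (Γ.mulVec (e j) i * Γ.mulVec Mv i)
            + β ^ 2 * (Γ.mulVec Mv i) ^ 2 := fun i _ => by ring
      have hsum : ∑ i, (α * Γ.mulVec (e j) i + β * Γ.mulVec Mv i) ^ 2
          = euclNorm (Γ.mulVec (e j)) ^ 2 * α ^ 2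
            + 2 * (∑ i, Γ.mulVec (e j) i * Γ.mulVec Mv i) * (α * β)
            + euclNorm (Γ.mulVec Mv) ^ 2 * β ^ 2 := by
        rw [Finset.sum_congr rfl expand, Finset.sum_add_distrib, Finset.sum_add_distrib,
          ← Finset.mul_sum, ← Finset.mul_sum, ← Finset.mul_sum,
          ← hsq (Γ.mulVec (e j)), ← hsq (Γ.mulVec Mv)]
        ring
      have hR : euclNorm (Γ.mulVec (fun i => α * e j i + β * Mv i))
          = Real.sqrt (euclNorm (Γ.mulVec (e j)) ^ 2 * α ^ 2
            + 2 * (∑ i, Γ.mulVec (e j) i * Γ.mulVec Mv i) * (α * β)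
            + euclNorm (Γ.mulVec Mv) ^ 2 * β ^ 2) := by
        rw [hlin]
        exact congrArg Real.sqrt hsum
      rw [hL, hR] at h0
      exact h0
  have hA1 : ∀ j, B3 T (e j) (e j) Mv = ∑ k, T j j k * Mv k := by
    intro j
    unfold B3
    simp [hedef, Finset.sum_ite_eq']
  have step : ∑ k, Mv k ^ 2 = ∑ j, B3 T (e j) (e j) Mv := by
    rw [Finset.sum_congr rfl (fun j (_ : j ∈ Finset.univ) => hA1 j), Finset.sum_comm]
    refine Finset.sum_congr rfl fun k _ => ?_
    rw [← Finset.sum_mul]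
    have h2 : ∑ j', T j' j' k = Mv k := by
      rw [hMvdef]
      refine Finset.sum_congr rfl fun j' _ => ?_
      rw [h23 j' j' k, h12 j' k j']
    rw [h2]; ring
  have htrace : (Γ ^ 2).trace = ∑ j, euclNorm (Γ.mulVec (e j)) ^ 2 := by
    have h1 : (Γ ^ 2).trace = ∑ i, ∑ k, Γ i k * Γ k i := by
      rw [Matrix.trace, pow_two]
      exact Finset.sum_congr rfl fun i _ => by rw [Matrix.diag_apply, Matrix.mul_apply]
    rw [h1, Finset.sum_comm]
    refine Finset.sum_congr rfl fun k _ => ?_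
    rw [hsq, hmve k]
    refine Finset.sum_congr rfl fun i _ => ?_
    rw [hΓ.apply i k]
    ring
  have kk : ∑ k, Mv k ^ 2
      ≤ τ * euclNorm (Γ.mulVec Mv) * ∑ j, euclNorm (Γ.mulVec (e j)) ^ 2 := by
    rw [step]
    calc ∑ j, B3 T (e j) (e j) Mv ≤ ∑ j, |B3 T (e j) (e j) Mv| :=
          Finset.sum_le_sum fun j _ => le_abs_self _
      _ ≤ ∑ j, τ * (euclNorm (Γ.mulVec (e j)) ^ 2 * euclNorm (Γ.mulVec Mv)) :=
          Finset.sum_le_sum fun j _ => hper j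
      _ = _ := by
          rw [Finset.mul_sum]
          exact Finset.sum_congr rfl fun j _ => by ring
  have htrnn : 0 ≤ (Γ ^ 2).trace := by
    rw [htrace]
    positivity
  have hspnn : 0 ≤ specNorm Γ := norm_nonneg _
  have hop := mulVec_euclNorm_le Γ Mv
  have hfin : euclNorm Mv ^ 2 ≤ τ * specNorm Γ * (Γ ^ 2).trace * euclNorm Mv := by
    have h5 : τ * euclNorm (Γ.mulVec Mv) ≤ τ * (specNorm Γ * euclNorm Mv) :=
      mul_le_mul_of_nonneg_left hop hτ.le
    have h6 : τ * euclNorm (Γ.mulVec Mv) * (Γ ^ 2).trace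
        ≤ τ * (specNorm Γ * euclNorm Mv) * (Γ ^ 2).trace :=
      mul_le_mul_of_nonneg_right h5 htrnn
    have h7 := kk
    rw [← htrace] at h7
    rw [hsq]
    calc ∑ i, Mv i ^ 2 ≤ τ * euclNorm (Γ.mulVec Mv) * (Γ ^ 2).trace := h7
      _ ≤ τ * (specNorm Γ * euclNorm Mv) * (Γ ^ 2).trace := h6
      _ = τ * specNorm Γ * (Γ ^ 2).trace * euclNorm Mv := by ring
  rcases eq_or_lt_of_le (hnn Mv) with h0 | h0
  · rw [← h0]
    exact mul_nonneg (mul_nonneg hτ.le hspnn) htrnn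
  · have h8 : euclNorm Mv * euclNorm Mv
        ≤ (τ * specNorm Γ * (Γ ^ 2).trace) * euclNorm Mv := by nlinarith [hfin]
    exact le_of_mul_le_mul_right h8 h0
end
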